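/- arXiv:1903.02255 — 3 statements merged into one kernel-verified Lean document; each statement's English description precedes it below -/
import Mathlib

section
/- Delsarte's covering radius bound: for any code C ⊆ F_q^n with external distance s' (the number of nonzero components B'_i with i ≥ 1 of the dual distance distribution), the covering radius ρ(C) = max_{x ∈ F_q^n} min_{c ∈ C} d(x,c) satisfies ρ(C) ≤ s'. -/
open Finset

/-- Generalized binomial coefficient `C(z, j) = z(z-1)⋯(z-j+1)/j!` for real `z`. -/
noncomputable def realChoose (z : ℝ) (j : ℕ) : ℝ :=
  (∏ k ∈ Finset.range j, (z - k)) / (Nat.factorial j)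

/-- The Krawtchouk polynomial `K_i^{(n,q)}(z)`. -/
noncomputable def kraw (n q i : ℕ) (z : ℝ) : ℝ :=
  ∑ j ∈ Finset.range (i + 1),
    (-1 : ℝ) ^ j * ((q : ℝ) - 1) ^ (i - j) * (q : ℝ) ^ j *
      ((n - j).choose (n - i) : ℝ) * realChoose z j

/-- The distance distribution `B_i` of a code `C ⊆ F_q^n`. -/
noncomputable def distDistrib {n q : ℕ} (C : Finset (Fin n → Fin q)) (i : ℕ) : ℝ :=
  (((C ×ˢ C).filter (fun p => hammingDist p.1 p.2 = i)).card : ℝ) / (C.card : ℝ)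

/-- The dual distance distribution (MacWilliams transform) `B'_i` of a code. -/
noncomputable def dualDistDistrib {n q : ℕ} (C : Finset (Fin n → Fin q)) (i : ℕ) : ℝ :=
  (∑ j ∈ Finset.range (n + 1), distDistrib C j * kraw n q i j) / (C.card : ℝ)


noncomputable def eC (q : ℕ) (m : ℤ) : ℂ := Complex.exp (2 * Real.pi * Complex.I * m / q)

lemma eC_zero (q : ℕ) : eC q 0 = 1 := by simp [eC]

lemma eC_add (q : ℕ) (a b : ℤ) : eC q (a + b) = eC q a * eC q b := by
  rw [eC, eC, eC, ← Complex.exp_add]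
  congr 1
  push_cast
  ring

lemma eC_sum {α : Type*} (q : ℕ) (s : Finset α) (f : α → ℤ) :
    eC q (∑ k ∈ s, f k) = ∏ k ∈ s, eC q (f k) := by
  classical
  induction s using Finset.induction with
  | empty => simp [eC_zero]
  | insert _ _ h ih => rw [Finset.sum_insert h, Finset.prod_insert h, eC_add, ih]

lemma eC_int_mul (q : ℕ) (m : ℤ) : eC q ((q : ℤ) * m) = 1 := by
  rcases Nat.eq_zero_or_pos q with h | h
  · simp [h, eC]
  · rw [eC]
    have hq : (q : ℂ) ≠ 0 := by exact_mod_cast h.ne'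
    have : 2 * (Real.pi : ℂ) * Complex.I * ((q:ℤ) * m : ℤ) / q = (m : ℤ) * (2 * Real.pi * Complex.I) := by
      push_cast
      field_simp
    rw [this, Complex.exp_int_mul_two_pi_mul_I]

lemma eC_congr (q : ℕ) {a b : ℤ} (h : (q : ℤ) ∣ (a - b)) : eC q a = eC q b := by
  obtain ⟨t, ht⟩ := h
  have : a = b + (q : ℤ) * t := by linarith
  rw [this, eC_add, eC_int_mul, mul_one]

lemma eC_pow (q : ℕ) (m : ℤ) (k : ℕ) : eC q m ^ k = eC q (k * m) := by
  induction k with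
  | zero => simp [eC_zero]
  | succ k ih => rw [pow_succ, ih, ← eC_add]; congr 1; push_cast; ring

lemma eC_eq_one_iff (q : ℕ) (hq : 0 < q) (m : ℤ) : eC q m = 1 ↔ (q : ℤ) ∣ m := by
  rw [eC, Complex.exp_eq_one_iff]
  constructor
  · rintro ⟨t, ht⟩
    have hq' : (q : ℂ) ≠ 0 := by exact_mod_cast hq.ne'
    have h2 : (2 * (Real.pi:ℂ) * Complex.I) ≠ 0 := by
      simp [Real.pi_ne_zero, Complex.I_ne_zero]
    have : (m : ℂ) = (t : ℂ) * q := by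
      field_simp at ht
      have := ht
      -- 2 π I m = t * (2 π I) * q
      apply mul_left_cancel₀ h2
      rw [mul_comm ((t:ℂ)) ((q:ℂ))] at *
      linear_combination (2 * (Real.pi:ℂ) * Complex.I) * ht
    have hm : (m : ℂ) = (((q:ℤ) * t : ℤ) : ℂ) := by push_cast; linear_combination this
    exact ⟨t, by exact_mod_cast hm⟩
  · rintro ⟨t, rfl⟩
    refine ⟨t, ?_⟩
    have hq' : (q : ℂ) ≠ 0 := by exact_mod_cast hq.ne'
    push_cast
    field_simp

lemma eC_geom (q : ℕ) (hq : 0 < q) (b : ℤ) :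
    ∑ a : Fin q, eC q ((a : ℕ) * b) = if (q : ℤ) ∣ b then (q : ℂ) else 0 := by
  have key : ∀ a : Fin q, eC q ((a : ℕ) * b) = eC q b ^ (a : ℕ) := fun a => by
    rw [eC_pow]
  simp_rw [key]
  rw [Fin.sum_univ_eq_sum_range (fun i => eC q b ^ i) q]
  by_cases hd : (q : ℤ) ∣ b
  · have : eC q b = 1 := (eC_eq_one_iff q hq b).2 hd
    simp [this, hd]
  · have h1 : eC q b ≠ 1 := fun h => hd ((eC_eq_one_iff q hq b).1 h)
    rw [geom_sum_eq h1, if_neg hd]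
    have : eC q b ^ q = 1 := by rw [eC_pow]; exact_mod_cast eC_int_mul q b
    simp [this]

-- sum over fixed-weight vectors
lemma sum_wt_eq {n q : ℕ} [NeZero q] (g : Fin n → Fin q → ℂ) (hg : ∀ k, g k 0 = 1) (i : ℕ) :
    ∑ u ∈ univ.filter (fun u : Fin n → Fin q => hammingNorm u = i), ∏ k, g k (u k)
    = ∑ T ∈ powersetCard i (univ : Finset (Fin n)),
        ∏ k ∈ T, (∑ a ∈ univ.filter (fun a : Fin q => a ≠ 0), g k a) := by
  classical
  have h1 : ∑ u ∈ univ.filter (fun u : Fin n → Fin q => hammingNorm u = i), ∏ k, g k (u k)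
      = ∑ T ∈ powersetCard i (univ : Finset (Fin n)),
          ∑ u ∈ (univ.filter (fun u : Fin n → Fin q => hammingNorm u = i)).filter
            (fun u => univ.filter (fun k => u k ≠ 0) = T), ∏ k, g k (u k) := by
    rw [Finset.sum_fiberwise_of_maps_to]
    intro u hu
    simp only [mem_filter, mem_univ, true_and] at hu
    rw [Finset.mem_powersetCard]
    exact ⟨Finset.subset_univ _, hu⟩
  rw [h1]
  apply Finset.sum_congr rfl
  intro T hT
  rw [Finset.mem_powersetCard] at hT
  have h2 : (univ.filter (fun u : Fin n → Fin q => hammingNorm u = i)).filter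
      (fun u => univ.filter (fun k => u k ≠ 0) = T)
      = Fintype.piFinset (fun k => if k ∈ T then univ.filter (fun a : Fin q => a ≠ 0) else {0}) := by
    ext u
    simp only [mem_filter, mem_univ, true_and, Fintype.mem_piFinset]
    constructor
    · rintro ⟨-, hsupp⟩ k
      by_cases hk : k ∈ T
      · rw [if_pos hk]
        rw [← hsupp] at hk
        simpa using hk
      · rw [if_neg hk, Finset.mem_singleton]
        rw [← hsupp] at hk
        simpa using hk
    · intro h
      have hsupp : univ.filter (fun k => u k ≠ 0) = T := by
        ext k
        simp only [mem_filter, mem_univ, true_and]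
        constructor
        · intro hk
          by_contra hkT
          have := h k
          rw [if_neg hkT, Finset.mem_singleton] at this
          exact hk this
        · intro hk
          have := h k
          rw [if_pos hk] at this
          simpa using this
      refine ⟨?_, hsupp⟩
      rw [hammingNorm, hsupp, hT.2]
  rw [h2, ← Finset.prod_univ_sum]
  have h3 : ∀ k : Fin n,
      (∑ a ∈ (if k ∈ T then univ.filter (fun a : Fin q => a ≠ 0) else {0}), g k a)
      = if k ∈ T then (∑ a ∈ univ.filter (fun a : Fin q => a ≠ 0), g k a) else 1 := by
    intro k
    by_cases hk : k ∈ T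
    · rw [if_pos hk, if_pos hk]
    · rw [if_neg hk, if_neg hk, Finset.sum_singleton, hg]
  rw [Finset.prod_congr rfl (fun k _ => h3 k), Finset.prod_ite_mem, Finset.univ_inter]

lemma coeff_one_add (c : ℂ) (m l : ℕ) :
    ((1 + Polynomial.C c * Polynomial.X) ^ m).coeff l = (m.choose l : ℂ) * c ^ l := by
  rw [add_comm, add_pow]
  rw [Polynomial.finset_sum_coeff]
  have hterm : ∀ k ∈ range (m+1),
      ((Polynomial.C c * Polynomial.X) ^ k * 1 ^ (m - k) * ((m.choose k : ℕ) : Polynomial ℂ)).coeff l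
      = if k = l then (m.choose l : ℂ) * c ^ l else 0 := by
    intro k _
    rw [one_pow, mul_one, mul_pow, ← Polynomial.C_pow]
    have : ((m.choose k : ℕ) : Polynomial ℂ) = Polynomial.C ((m.choose k : ℕ) : ℂ) := by
      simp
    rw [this, mul_comm (Polynomial.C (c ^ k) * Polynomial.X ^ k) _, ← mul_assoc, ← Polynomial.C_mul,
      Polynomial.coeff_C_mul, Polynomial.coeff_X_pow]
    by_cases hk : k = l
    · subst hk; simp [mul_comm]
    · simp [hk, Ne.symm hk]
  rw [Finset.sum_congr rfl hterm]
  by_cases hl : l ∈ range (m+1)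
  · rw [Finset.sum_ite_eq' (range (m+1)) l (fun _ => (m.choose l : ℂ) * c ^ l), if_pos hl]
  · rw [Finset.sum_ite_eq' (range (m+1)) l (fun _ => (m.choose l : ℂ) * c ^ l), if_neg hl]
    rw [Finset.mem_range, not_lt] at hl
    rw [Nat.choose_eq_zero_of_lt (by omega)]
    simp

lemma count_sum (n : ℕ) (D : Finset (Fin n)) (i : ℕ) (c₁ c₂ : ℂ) :
    ∑ T ∈ powersetCard i (univ : Finset (Fin n)), ∏ k ∈ T, (if k ∈ D then c₁ else c₂)
    = ((1 + Polynomial.C c₁ * Polynomial.X) ^ D.card *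
        (1 + Polynomial.C c₂ * Polynomial.X) ^ (n - D.card)).coeff i := by
  classical
  have key : ∏ k : Fin n, (Polynomial.C (if k ∈ D then c₁ else c₂) * Polynomial.X + 1)
      = (1 + Polynomial.C c₁ * Polynomial.X) ^ D.card *
        (1 + Polynomial.C c₂ * Polynomial.X) ^ (n - D.card) := by
    rw [← Finset.prod_mul_prod_compl D]
    have e1 : ∏ k ∈ D, (Polynomial.C (if k ∈ D then c₁ else c₂) * Polynomial.X + 1)
        = (1 + Polynomial.C c₁ * Polynomial.X) ^ D.card := by
      rw [Finset.prod_congr rfl (g := fun _ => 1 + Polynomial.C c₁ * Polynomial.X)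
        (fun k hk => by rw [if_pos hk, add_comm]), Finset.prod_const]
    have e2 : ∏ k ∈ Dᶜ, (Polynomial.C (if k ∈ D then c₁ else c₂) * Polynomial.X + 1)
        = (1 + Polynomial.C c₂ * Polynomial.X) ^ (n - D.card) := by
      rw [Finset.prod_congr rfl (g := fun _ => 1 + Polynomial.C c₂ * Polynomial.X)
        (fun k hk => by rw [if_neg (Finset.mem_compl.mp hk), add_comm]), Finset.prod_const,
        Finset.card_compl]
      simp
    rw [e1, e2]
  rw [← key, Finset.prod_add]
  rw [Polynomial.finset_sum_coeff]
  have hterm : ∀ T ∈ (univ : Finset (Fin n)).powerset,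
      ((∏ k ∈ T, Polynomial.C (if k ∈ D then c₁ else c₂) * Polynomial.X) *
          ∏ _k ∈ univ \ T, (1:Polynomial ℂ)).coeff i
      = if T.card = i then ∏ k ∈ T, (if k ∈ D then c₁ else c₂) else 0 := by
    intro T _
    rw [Finset.prod_const_one, mul_one, Finset.prod_mul_distrib, Finset.prod_const,
      ← map_prod (Polynomial.C : ℂ →+* Polynomial ℂ) _ T, Polynomial.coeff_C_mul, Polynomial.coeff_X_pow]
    by_cases hT : T.card = i
    · rw [if_pos hT, if_pos hT.symm, mul_one]
    · rw [if_neg hT, if_neg (fun hh2 => hT hh2.symm), mul_zero]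
  rw [Finset.sum_congr rfl hterm, ← Finset.sum_filter, ← Finset.powersetCard_eq_filter]
lemma realChoose_nat (d j : ℕ) : realChoose (d : ℝ) j = (d.choose j : ℝ) := by
  have hprod : ∏ k ∈ range j, ((d:ℝ) - k) = (d.descFactorial j : ℝ) := by
    by_cases hjd : j ≤ d
    · rw [Nat.descFactorial_eq_prod_range, Nat.cast_prod]
      apply Finset.prod_congr rfl
      intro k hk
      rw [Finset.mem_range] at hk
      have : k ≤ d := by omega
      push_cast [this]
      ring
    · push_neg at hjd
      have h1 : ∏ k ∈ range j, ((d:ℝ) - k) = 0 := by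
        apply Finset.prod_eq_zero (Finset.mem_range.mpr hjd)
        simp
      have h2 : d.descFactorial j = 0 := Nat.descFactorial_eq_zero_iff_lt.mpr hjd
      rw [h1, h2, Nat.cast_zero]
  rw [realChoose, hprod, Nat.descFactorial_eq_factorial_mul_choose, Nat.cast_mul,
    mul_comm, mul_div_assoc, div_self (by positivity : ((j.factorial : ℝ)) ≠ 0), mul_one]

lemma kraw_nat_eq (n q i d : ℕ) (hi : i ≤ n) :
    kraw n q i (d : ℝ)
    = ∑ j ∈ range (i+1),
        (-1:ℝ)^j * ((q:ℝ)-1)^(i-j) * (q:ℝ)^j * ((n-j).choose (i-j) : ℝ) * (d.choose j : ℝ) := by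
  rw [kraw]
  apply Finset.sum_congr rfl
  intro j hj
  rw [Finset.mem_range] at hj
  have hji : j ≤ i := by omega
  have hsymm : (n-j).choose (n-i) = (n-j).choose (i-j) := by
    have h1 : n - i ≤ n - j := by omega
    have h2 : (n - j) - (n - i) = i - j := by omega
    rw [← Nat.choose_symm h1, h2]
  rw [realChoose_nat, hsymm]

-- coefficient of the generating polynomial, alternate (kraw) form
lemma coeff_gen_eq_kraw (n q i d : ℕ) (hq : 2 ≤ q) (hi : i ≤ n) (hd : d ≤ n) :
    ((1 + Polynomial.C (-1:ℂ) * Polynomial.X) ^ d *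
      (1 + Polynomial.C ((q:ℂ)-1) * Polynomial.X) ^ (n-d)).coeff i
    = ((kraw n q i (d : ℝ) : ℝ) : ℂ) := by
  classical
  set Y : Polynomial ℂ := 1 + Polynomial.C ((q:ℂ)-1) * Polynomial.X with hY
  -- Step 1: (1 - X)^d as a sum
  have split : (1 + Polynomial.C (-1:ℂ) * Polynomial.X)
      = Polynomial.C (-(q:ℂ)) * Polynomial.X + Y := by
    rw [hY]
    rw [show (-(q:ℂ)) = (-1 : ℂ) - ((q:ℂ) - 1) by ring, Polynomial.C_sub]
    ring
  have step1 : (1 + Polynomial.C (-1:ℂ) * Polynomial.X) ^ d * Y ^ (n-d)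
      = ∑ j ∈ range (d+1),
          Polynomial.C ((-(q:ℂ))^j * (d.choose j : ℂ)) * Polynomial.X ^ j * Y ^ (n-j) := by
    rw [split, add_pow, Finset.sum_mul]
    apply Finset.sum_congr rfl
    intro j hj
    rw [Finset.mem_range] at hj
    have hjd : j ≤ d := by omega
    have hexp : (d - j) + (n - d) = n - j := by omega
    rw [mul_pow, ← Polynomial.C_pow]
    have hch : ((d.choose j : ℕ) : Polynomial ℂ) = Polynomial.C ((d.choose j : ℕ) : ℂ) := by simp
    rw [hch, Polynomial.C_mul]
    rw [show Polynomial.C ((-(q:ℂ))^j) * Polynomial.X ^ j * Y ^ (d-j) *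
        (Polynomial.C ((d.choose j:ℕ):ℂ)) * Y ^ (n-d)
        = Polynomial.C ((-(q:ℂ))^j) * Polynomial.C ((d.choose j:ℕ):ℂ) * Polynomial.X ^ j *
          (Y ^ (d-j) * Y ^ (n-d)) by ring]
    rw [← pow_add, hexp]
  have coeffY : ∀ m l : ℕ, (Y ^ m).coeff l = (m.choose l : ℂ) * ((q:ℂ)-1) ^ l := by
    intro m l
    rw [hY, coeff_one_add]
  -- coefficient of each summand
  have step2 : ((1 + Polynomial.C (-1:ℂ) * Polynomial.X) ^ d * Y ^ (n-d)).coeff i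
      = ∑ j ∈ range (d+1),
          (if j ≤ i then
            (-(q:ℂ))^j * (d.choose j : ℂ) * ((n-j).choose (i-j) : ℂ) * ((q:ℂ)-1)^(i-j)
          else 0) := by
    rw [step1, Polynomial.finset_sum_coeff]
    apply Finset.sum_congr rfl
    intro j hj
    rw [mul_assoc, mul_comm (Polynomial.X ^ j) (Y ^ (n-j)), ← mul_assoc]
    rw [Polynomial.coeff_mul_X_pow', Polynomial.coeff_C_mul, coeffY]
    by_cases hji : j ≤ i
    · rw [if_pos hji, if_pos hji]; ring
    · rw [if_neg hji]; rw [if_neg hji]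
  rw [step2, kraw_nat_eq n q i d hi]
  have hcast : ((∑ j ∈ range (i+1),
      (-1:ℝ)^j * ((q:ℝ)-1)^(i-j) * (q:ℝ)^j * ((n-j).choose (i-j) : ℝ) * (d.choose j : ℝ) : ℝ) : ℂ)
      = ∑ j ∈ range (i+1),
          (-1:ℂ)^j * ((q:ℂ)-1)^(i-j) * (q:ℂ)^j * ((n-j).choose (i-j) : ℂ) * (d.choose j : ℂ) := by
    push_cast
    rfl
  rw [hcast]
  have common : ∀ j : ℕ,
      (-1:ℂ)^j * ((q:ℂ)-1)^(i-j) * (q:ℂ)^j * ((n-j).choose (i-j) : ℂ) * (d.choose j : ℂ)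
      = (-(q:ℂ))^j * (d.choose j : ℂ) * ((n-j).choose (i-j) : ℂ) * ((q:ℂ)-1)^(i-j) := by
    intro j
    rw [neg_pow (q:ℂ) j]
    ring
  have lhs_eq : ∑ j ∈ range (d+1), (if j ≤ i then
        (-(q:ℂ))^j * (d.choose j : ℂ) * ((n-j).choose (i-j) : ℂ) * ((q:ℂ)-1)^(i-j) else 0)
      = ∑ j ∈ range (d+i+1), (if j ≤ i then
        (-(q:ℂ))^j * (d.choose j : ℂ) * ((n-j).choose (i-j) : ℂ) * ((q:ℂ)-1)^(i-j) else 0) := by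
    apply Finset.sum_subset
    · intro j hj
      rw [Finset.mem_range] at *
      omega
    · intro j _ hj
      rw [Finset.mem_range, not_lt] at hj
      by_cases hji : j ≤ i
      · rw [if_pos hji, Nat.choose_eq_zero_of_lt (by omega : d < j)]
        simp
      · rw [if_neg hji]
  have rhs_eq : ∑ j ∈ range (i+1),
      (-1:ℂ)^j * ((q:ℂ)-1)^(i-j) * (q:ℂ)^j * ((n-j).choose (i-j) : ℂ) * (d.choose j : ℂ)
      = ∑ j ∈ range (d+i+1), (if j ≤ i then
        (-(q:ℂ))^j * (d.choose j : ℂ) * ((n-j).choose (i-j) : ℂ) * ((q:ℂ)-1)^(i-j) else 0) := by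
    rw [Finset.sum_congr rfl (fun j hj =>
      (common j).trans (if_pos (by rw [Finset.mem_range] at hj; omega : j ≤ i)).symm)]
    apply Finset.sum_subset
    · intro j hj
      rw [Finset.mem_range] at *
      omega
    · intro j _ hj
      rw [Finset.mem_range, not_lt] at hj
      rw [if_neg (by omega : ¬ j ≤ i)]
  rw [lhs_eq, rhs_eq]
lemma int_dvd_iff_eq {q : ℕ} (hq : 0 < q) (a b : Fin q) :
    (q:ℤ) ∣ (((a.val : ℕ) : ℤ) - ((b.val : ℕ) : ℤ)) ↔ a = b := by
  constructor
  · rintro ⟨t, ht⟩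
    have ha := a.is_lt
    have hb := b.is_lt
    have hq' : (0:ℤ) < q := by exact_mod_cast hq
    have h1 : (q:ℤ) * t < (q:ℤ) * 1 := by
      rw [mul_one, ← ht]
      have : ((a.val : ℕ) : ℤ) < q := by exact_mod_cast ha
      have : (0:ℤ) ≤ ((b.val : ℕ) : ℤ) := by positivity
      omega
    have h2 : (q:ℤ) * (-1) < (q:ℤ) * t := by
      rw [← ht]
      have : ((b.val : ℕ) : ℤ) < q := by exact_mod_cast hb
      have : (0:ℤ) ≤ ((a.val : ℕ) : ℤ) := by positivity
      omega
    have ht1 : t < 1 := by exact (mul_lt_mul_iff_right₀ hq').mp h1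
    have ht2 : (-1:ℤ) < t := by exact (mul_lt_mul_iff_right₀ hq').mp h2
    have : t = 0 := by omega
    rw [this, mul_zero] at ht
    have : a.val = b.val := by omega
    exact Fin.ext this
  · rintro rfl
    simp

lemma char_sum (n q : ℕ) [NeZero q] (hq : 2 ≤ q) (i : ℕ) (hi : i ≤ n) (x y : Fin n → Fin q) :
    ∑ u ∈ univ.filter (fun u : Fin n → Fin q => hammingNorm u = i),
      eC q ((∑ k, ((u k).val : ℤ) * ((x k).val : ℤ)) - ∑ k, ((u k).val : ℤ) * ((y k).val : ℤ))
    = ((kraw n q i (hammingDist x y : ℝ) : ℝ) : ℂ) := by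
  classical
  have hq0 : 0 < q := by omega
  have step0 : ∀ u : Fin n → Fin q,
      eC q ((∑ k, ((u k).val : ℤ) * ((x k).val:ℤ)) - ∑ k, ((u k).val:ℤ) * ((y k).val:ℤ))
      = ∏ k, eC q (((u k).val:ℤ) * (((x k).val:ℤ) - ((y k).val:ℤ))) := by
    intro u
    have harg : (∑ k, ((u k).val : ℤ) * ((x k).val:ℤ)) - ∑ k, ((u k).val:ℤ) * ((y k).val:ℤ)
        = ∑ k, ((u k).val:ℤ) * (((x k).val:ℤ) - ((y k).val:ℤ)) := by
      rw [← Finset.sum_sub_distrib]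
      exact Finset.sum_congr rfl (fun k _ => (mul_sub _ _ _).symm)
    rw [harg, eC_sum]
  rw [Finset.sum_congr rfl (fun u _ => step0 u)]
  rw [sum_wt_eq (fun k a => eC q ((a.val:ℤ) * (((x k).val:ℤ) - ((y k).val:ℤ))))
    (fun k => by simp [eC_zero]) i]
  have hG : ∀ k : Fin n,
      (∑ a ∈ univ.filter (fun a : Fin q => a ≠ 0),
        eC q ((a.val:ℤ) * (((x k).val:ℤ) - ((y k).val:ℤ))))
      = if k ∈ univ.filter (fun k : Fin n => x k ≠ y k) then (-1:ℂ) else (q:ℂ)-1 := by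
    intro k
    have hfull := eC_geom q hq0 (((x k).val:ℤ) - ((y k).val:ℤ))
    rw [Finset.filter_ne', Finset.sum_erase_eq_sub (Finset.mem_univ (0 : Fin q))]
    rw [hfull]
    have h0 : eC q (((0:Fin q).val:ℤ) * (((x k).val:ℤ) - ((y k).val:ℤ))) = 1 := by
      simp [eC_zero]
    rw [h0]
    by_cases hxy : x k = y k
    · rw [if_pos (by rw [(int_dvd_iff_eq hq0 (x k) (y k))]; exact hxy),
        if_neg (by simp [hxy])]
    · rw [if_neg (fun hdvd => hxy ((int_dvd_iff_eq hq0 (x k) (y k)).mp hdvd)),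
        if_pos (by simp [hxy])]
      ring
  rw [Finset.sum_congr rfl (fun T _ => Finset.prod_congr rfl (fun k _ => hG k))]
  rw [count_sum n (univ.filter (fun k : Fin n => x k ≠ y k)) i (-1) ((q:ℂ)-1)]
  have hcard : (univ.filter (fun k : Fin n => x k ≠ y k)).card = hammingDist x y := rfl
  rw [hcard]
  exact coeff_gen_eq_kraw n q i (hammingDist x y) hq hi
    (le_trans hammingDist_le_card_fintype (by simp))
noncomputable def krawPoly (n q i : ℕ) : Polynomial ℝ :=
  ∑ j ∈ range (i+1),
    Polynomial.C ((-1:ℝ)^j * ((q:ℝ)-1)^(i-j) * (q:ℝ)^j * ((n-j).choose (n-i) : ℝ)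
        / (j.factorial : ℝ)) *
      ∏ k ∈ range j, (Polynomial.X - Polynomial.C (k:ℝ))

lemma krawPoly_eval (n q i : ℕ) (z : ℝ) : (krawPoly n q i).eval z = kraw n q i z := by
  rw [krawPoly, kraw, Polynomial.eval_finset_sum]
  apply Finset.sum_congr rfl
  intro j _
  rw [Polynomial.eval_mul, Polynomial.eval_C, Polynomial.eval_prod, realChoose]
  rw [Finset.prod_congr rfl (fun k _ => by
    rw [Polynomial.eval_sub, Polynomial.eval_X, Polynomial.eval_C])]
  ring

lemma krawPoly_natDegree_le (n q i : ℕ) : (krawPoly n q i).natDegree ≤ i := by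
  apply Polynomial.natDegree_sum_le_of_forall_le
  intro j hj
  rw [Finset.mem_range] at hj
  apply le_trans (Polynomial.natDegree_mul_le)
  have h1 : (Polynomial.C ((-1:ℝ)^j * ((q:ℝ)-1)^(i-j) * (q:ℝ)^j * ((n-j).choose (n-i) : ℝ)
      / (j.factorial : ℝ))).natDegree = 0 := Polynomial.natDegree_C _
  have h2 : (∏ k ∈ range j, (Polynomial.X - Polynomial.C ((k:ℝ)))).natDegree ≤ j := by
    apply le_trans (Polynomial.natDegree_prod_le _ _)
    apply le_trans (Finset.sum_le_sum (g := fun _ => 1)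
      (fun k _ => by rw [Polynomial.natDegree_X_sub_C]))
    simp
  omega

lemma prodXsub_monic (j : ℕ) :
    (∏ k ∈ range j, (Polynomial.X - Polynomial.C ((k:ℝ)))).Monic :=
  Polynomial.monic_prod_of_monic _ _ (fun k _ => Polynomial.monic_X_sub_C _)

lemma prodXsub_natDegree (j : ℕ) :
    (∏ k ∈ range j, (Polynomial.X - Polynomial.C ((k:ℝ)))).natDegree = j := by
  have h := Polynomial.natDegree_prod (range j) (fun k : ℕ => Polynomial.X - Polynomial.C (k:ℝ))
    (fun k _ => Polynomial.X_sub_C_ne_zero _)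
  rw [h]
  simp only [Polynomial.natDegree_X_sub_C, Finset.sum_const, Finset.card_range, smul_eq_mul,
    mul_one]

lemma krawPoly_coeff_self (n q i : ℕ) :
    (krawPoly n q i).coeff i = (-1:ℝ)^i * (q:ℝ)^i / (i.factorial : ℝ) := by
  rw [krawPoly, Polynomial.finset_sum_coeff]
  rw [Finset.sum_range_succ]
  have hzero : ∀ j ∈ range i,
      (Polynomial.C ((-1:ℝ)^j * ((q:ℝ)-1)^(i-j) * (q:ℝ)^j * ((n-j).choose (n-i) : ℝ)
        / (j.factorial : ℝ)) * ∏ k ∈ range j, (Polynomial.X - Polynomial.C ((k:ℝ)))).coeff i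
      = 0 := by
    intro j hj
    rw [Finset.mem_range] at hj
    apply Polynomial.coeff_eq_zero_of_natDegree_lt
    apply lt_of_le_of_lt (Polynomial.natDegree_mul_le)
    rw [Polynomial.natDegree_C, prodXsub_natDegree]
    omega
  rw [Finset.sum_congr rfl hzero, Finset.sum_const, smul_zero, zero_add]
  rw [Polynomial.coeff_C_mul]
  have : (∏ k ∈ range i, (Polynomial.X - Polynomial.C ((k:ℝ)))).coeff i = 1 := by
    have h := (prodXsub_monic i).coeff_natDegree
    rwa [prodXsub_natDegree] at h
  rw [this, mul_one, Nat.choose_self, Nat.sub_self]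
  push_cast
  ring

lemma krawPoly_coeff_self_ne (n q i : ℕ) (hq : 2 ≤ q) :
    (krawPoly n q i).coeff i ≠ 0 := by
  rw [krawPoly_coeff_self]
  have h1 : (q:ℝ) > 0 := by positivity
  have h2 : ((i.factorial : ℝ)) > 0 := by positivity
  rcases Nat.even_or_odd i with he | ho
  · rw [he.neg_one_pow]
    positivity
  · rw [ho.neg_one_pow]
    have : (q:ℝ)^i > 0 := by positivity
    intro hc
    rw [div_eq_zero_iff] at hc
    rcases hc with hc | hc
    · nlinarith
    · linarith

lemma kraw_span (n q : ℕ) (hq : 2 ≤ q) :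
    ∀ (s : ℕ) (p : Polynomial ℝ), p.natDegree ≤ s →
      ∃ f : ℕ → ℝ, ∀ z : ℝ, p.eval z = ∑ j ∈ range (s+1), f j * kraw n q j z := by
  intro s
  induction s with
  | zero =>
    intro p hp
    refine ⟨fun _ => p.coeff 0, fun z => ?_⟩
    rw [Polynomial.eq_C_of_natDegree_le_zero hp]
    have hk0 : kraw n q 0 z = 1 := by
      simp [kraw, realChoose]
    simp [hk0]
  | succ s ih =>
    intro p hp
    set lc : ℝ := (krawPoly n q (s+1)).coeff (s+1) with hlc
    have hlcne : lc ≠ 0 := krawPoly_coeff_self_ne n q (s+1) hq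
    set r : Polynomial ℝ := p - Polynomial.C (p.coeff (s+1) / lc) * krawPoly n q (s+1) with hr
    have hrdeg : r.natDegree ≤ s := by
      rw [Polynomial.natDegree_le_iff_coeff_eq_zero]
      intro m hm
      rw [hr, Polynomial.coeff_sub, Polynomial.coeff_C_mul]
      rcases Nat.lt_or_ge m (s+2) with h1 | h1
      · have hm1 : m = s + 1 := by omega
        rw [hm1, ← hlc, div_mul_cancel₀ _ hlcne, sub_self]
      · rw [Polynomial.coeff_eq_zero_of_natDegree_lt (by omega : p.natDegree < m),
          Polynomial.coeff_eq_zero_of_natDegree_lt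
            (by have := krawPoly_natDegree_le n q (s+1); omega : (krawPoly n q (s+1)).natDegree < m)]
        ring
    obtain ⟨f, hf⟩ := ih r hrdeg
    refine ⟨fun j => if j = s + 1 then p.coeff (s+1) / lc else f j, fun z => ?_⟩
    rw [Finset.sum_range_succ]
    simp only [↓reduceIte]
    have hsum : (∑ j ∈ range (s+1), (if j = s + 1 then p.coeff (s+1) / lc else f j) * kraw n q j z)
        = ∑ j ∈ range (s+1), f j * kraw n q j z := by
      apply Finset.sum_congr rfl
      intro j hj
      rw [Finset.mem_range] at hj
      rw [if_neg (by omega : ¬ j = s + 1)]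
    rw [hsum, ← hf z]
    have : p.eval z = r.eval z + (p.coeff (s+1) / lc) * (krawPoly n q (s+1)).eval z := by
      rw [hr]
      simp
    rw [this, krawPoly_eval]
def dotP {n q : ℕ} (u v : Fin n → Fin q) : ℤ := ∑ k, ((u k).val : ℤ) * ((v k).val : ℤ)

lemma char_sum' (n q : ℕ) [NeZero q] (hq : 2 ≤ q) (i : ℕ) (hi : i ≤ n) (x y : Fin n → Fin q) :
    ∑ u ∈ univ.filter (fun u : Fin n → Fin q => hammingNorm u = i),
      eC q (dotP u x - dotP u y)
    = ((kraw n q i (hammingDist x y : ℝ) : ℝ) : ℂ) := char_sum n q hq i hi x y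

lemma dotP_comm {n q : ℕ} (u v : Fin n → Fin q) : dotP u v = dotP v u := by
  rw [dotP, dotP]
  exact Finset.sum_congr rfl (fun k _ => mul_comm _ _)

lemma dotP_zero_right {n q : ℕ} [NeZero q] (u : Fin n → Fin q) : dotP u 0 = 0 := by
  rw [dotP]
  apply Finset.sum_eq_zero
  intro k _
  simp

lemma dotP_zero_left {n q : ℕ} [NeZero q] (u : Fin n → Fin q) : dotP 0 u = 0 := by
  rw [dotP_comm, dotP_zero_right]

lemma eC_conj (q : ℕ) (m : ℤ) : (starRingEnd ℂ) (eC q m) = eC q (-m) := by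
  rw [eC, eC, ← Complex.exp_conj]
  congr 1
  have h : ((2:ℂ) * Real.pi * Complex.I * m / q) = (((2 * Real.pi * m / q : ℝ)):ℂ) * Complex.I := by
    push_cast
    ring
  rw [h, map_mul, Complex.conj_ofReal, Complex.conj_I]
  push_cast
  ring

lemma dotP_add_congr {n q : ℕ} [NeZero q] (u x w : Fin n → Fin q) :
    (q:ℤ) ∣ (dotP u (x + w) - (dotP u x + dotP u w)) := by
  rw [dotP, dotP, dotP, ← Finset.sum_add_distrib, ← Finset.sum_sub_distrib]
  apply Finset.dvd_sum
  intro k _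
  have heq : ((u k).val:ℤ) * (((x + w) k).val:ℤ)
      - (((u k).val:ℤ)*((x k).val:ℤ) + ((u k).val:ℤ)*((w k).val:ℤ))
      = ((u k).val:ℤ) * ((((x + w) k).val:ℤ) - (((x k).val:ℤ) + ((w k).val:ℤ))) := by ring
  rw [heq]
  apply Dvd.dvd.mul_left
  have hval : (((x + w) k).val : ℤ) = ((((x k).val + (w k).val) % q : ℕ) : ℤ) := by
    rw [Pi.add_apply, Fin.val_add]
  rw [hval]
  set m : ℤ := (((x k).val : ℕ) : ℤ) + (((w k).val : ℕ) : ℤ) with hm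
  have hcast : ((((x k).val + (w k).val) % q : ℕ) : ℤ) = m % q := by
    push_cast
    rfl
  rw [hcast]
  refine ⟨-(m / q), ?_⟩
  rw [Int.emod_def]
  ring

lemma delta_sum (n q : ℕ) [NeZero q] (hq : 2 ≤ q) (a b : Fin n → Fin q) :
    ∑ u : Fin n → Fin q, eC q (dotP u a - dotP u b) = if a = b then ((q:ℂ))^n else 0 := by
  classical
  have hq0 : 0 < q := by omega
  have step0 : ∀ u : Fin n → Fin q,
      eC q (dotP u a - dotP u b)
      = ∏ k, eC q (((u k).val:ℤ) * (((a k).val:ℤ) - ((b k).val:ℤ))) := by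
    intro u
    have harg : dotP u a - dotP u b
        = ∑ k, ((u k).val:ℤ) * (((a k).val:ℤ) - ((b k).val:ℤ)) := by
      rw [dotP, dotP, ← Finset.sum_sub_distrib]
      exact Finset.sum_congr rfl (fun k _ => (mul_sub _ _ _).symm)
    rw [harg, eC_sum]
  rw [Finset.sum_congr rfl (fun u _ => step0 u)]
  rw [← Fintype.piFinset_univ,
    ← Finset.prod_univ_sum (fun _ : Fin n => (univ : Finset (Fin q)))
      (fun k t => eC q ((t.val:ℤ) * (((a k).val:ℤ) - ((b k).val:ℤ))))]
  have hfac : ∀ k : Fin n,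
      (∑ t : Fin q, eC q ((t.val:ℤ) * (((a k).val:ℤ) - ((b k).val:ℤ))))
      = if a k = b k then (q:ℂ) else 0 := by
    intro k
    rw [eC_geom q hq0]
    by_cases hk : a k = b k
    · rw [if_pos ((int_dvd_iff_eq hq0 (a k) (b k)).mpr hk), if_pos hk]
    · rw [if_neg (fun hd => hk ((int_dvd_iff_eq hq0 (a k) (b k)).mp hd)), if_neg hk]
  rw [Finset.prod_congr rfl (fun k _ => hfac k)]
  by_cases hab : a = b
  · subst hab
    simp
  · have : ∃ k, a k ≠ b k := by
      by_contra hk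
      push_neg at hk
      exact hab (funext hk)
    obtain ⟨k, hk⟩ := this
    rw [if_neg hab]
    exact Finset.prod_eq_zero (Finset.mem_univ k) (by rw [if_neg hk])

lemma hd_add_right {n q : ℕ} [NeZero q] (x w : Fin n → Fin q) :
    hammingDist x (x + w) = hammingNorm w := by
  rw [hammingDist, hammingNorm]
  congr 1
  ext k
  simp only [Finset.mem_filter, Finset.mem_univ, true_and, Pi.add_apply, ne_eq]
  exact not_congr left_eq_add

lemma hammingNorm_le {n q : ℕ} [NeZero q] (u : Fin n → Fin q) : hammingNorm u ≤ n := by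
  rw [hammingNorm]
  exact le_trans (Finset.card_filter_le _ _) (by simp)

lemma Szero (n q : ℕ) [NeZero q] (hq : 2 ≤ q) (C : Finset (Fin n → Fin q)) (hC : C.Nonempty)
    (i : ℕ) (hin : i ≤ n) (hB : dualDistDistrib C i = 0) :
    ∀ u : Fin n → Fin q, hammingNorm u = i → (∑ c ∈ C, eC q (dotP u c)) = 0 := by
  classical
  have hCcard : (0:ℝ) < (C.card : ℝ) := by exact_mod_cast Finset.card_pos.mpr hC
  have hnum : ∑ j ∈ range (n+1), distDistrib C j * kraw n q i (j : ℝ) = 0 := by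
    rw [dualDistDistrib, div_eq_zero_iff] at hB
    rcases hB with h | h
    · exact h
    · exact absurd h (ne_of_gt hCcard)
  have hpairs : ∑ p ∈ C ×ˢ C, kraw n q i (hammingDist p.1 p.2 : ℝ) = 0 := by
    have hmap : ∀ p ∈ C ×ˢ C, hammingDist p.1 p.2 ∈ range (n+1) := by
      intro p _
      rw [Finset.mem_range]
      have := hammingDist_le_card_fintype (x := p.1) (y := p.2)
      simp only [Fintype.card_fin] at this
      omega
    rw [← Finset.sum_fiberwise_of_maps_to hmap (fun p => kraw n q i (hammingDist p.1 p.2 : ℝ))]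
    have h1 : ∀ j ∈ range (n+1),
        (∑ p ∈ (C ×ˢ C).filter (fun p => hammingDist p.1 p.2 = j),
          kraw n q i (hammingDist p.1 p.2 : ℝ))
        = (C.card : ℝ) * (distDistrib C j * kraw n q i (j : ℝ)) := by
      intro j _
      rw [Finset.sum_congr rfl (fun p hp => by
        rw [(Finset.mem_filter.mp hp).2]), Finset.sum_const, nsmul_eq_mul, distDistrib]
      field_simp
    rw [Finset.sum_congr rfl h1, ← Finset.mul_sum, hnum, mul_zero]
  have hchar : ∑ u ∈ univ.filter (fun u : Fin n → Fin q => hammingNorm u = i),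
      ((Complex.normSq (∑ c ∈ C, eC q (dotP u c)) : ℝ) : ℂ)
      = ((∑ p ∈ C ×ˢ C, kraw n q i (hammingDist p.1 p.2 : ℝ) : ℝ) : ℂ) := by
    have expand : ∀ u : Fin n → Fin q,
        ((Complex.normSq (∑ c ∈ C, eC q (dotP u c)) : ℝ) : ℂ)
        = ∑ p ∈ C ×ˢ C, eC q (dotP u p.1 - dotP u p.2) := by
      intro u
      rw [← Complex.mul_conj, map_sum, Finset.sum_mul_sum, ← Finset.sum_product']
      apply Finset.sum_congr rfl
      intro p _
      rw [eC_conj, ← eC_add]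
      congr 1
    rw [Finset.sum_congr rfl (fun u _ => expand u), Finset.sum_comm]
    push_cast
    apply Finset.sum_congr rfl
    intro p _
    exact char_sum' n q hq i hin p.1 p.2
  intro u hu
  have hsum0 : ∑ u ∈ univ.filter (fun u : Fin n → Fin q => hammingNorm u = i),
      Complex.normSq (∑ c ∈ C, eC q (dotP u c)) = 0 := by
    rw [hpairs] at hchar
    have h2 : ((∑ u ∈ univ.filter (fun u : Fin n → Fin q => hammingNorm u = i),
        Complex.normSq (∑ c ∈ C, eC q (dotP u c)) : ℝ) : ℂ) = ((0:ℝ):ℂ) := by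
      rw [Complex.ofReal_sum]
      simpa using hchar
    exact_mod_cast h2
  have hall := (Finset.sum_eq_zero_iff_of_nonneg
    (fun u _ => Complex.normSq_nonneg _)).mp hsum0
  have hz := hall u (by simp [hu])
  exact Complex.normSq_eq_zero.mp hz

theorem delsarte_covering_radius_bound (n q : ℕ) (hn : 1 ≤ n) (hq : 2 ≤ q)
    (C : Finset (Fin n → Fin q)) (hC : C.Nonempty)
    (s' : ℕ)
    (hs' : s' = ((Finset.Icc 1 n).filter (fun i => dualDistDistrib C i ≠ 0)).card) :
    ∀ x : Fin n → Fin q, ∃ c ∈ C, hammingDist x c ≤ s' := by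
  haveI : NeZero q := ⟨by omega⟩
  classical
  intro x
  by_contra hcon
  push_neg at hcon
  set S : Finset ℕ := (Finset.Icc 1 n).filter (fun i => dualDistDistrib C i ≠ 0) with hS
  have hSsub : ∀ α ∈ S, 1 ≤ α ∧ α ≤ n := by
    intro α hα
    have h := (Finset.mem_filter.mp hα).1
    rw [Finset.mem_Icc] at h
    exact h
  have hs'n : s' ≤ n := by
    rw [hs']
    calc S.card ≤ (Finset.Icc 1 n).card := Finset.card_filter_le _ _
    _ = n := by rw [Nat.card_Icc]; omega
  -- the annihilator polynomial
  set P : Polynomial ℝ := ∏ α ∈ S, (Polynomial.C (α:ℝ) - Polynomial.X) with hP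
  have hPdeg : P.natDegree ≤ s' := by
    rw [hP, hs']
    apply le_trans (Polynomial.natDegree_prod_le _ _)
    apply le_trans (Finset.sum_le_sum (g := fun _ => 1) (fun α _ => ?_))
    · simp
    · apply le_trans (Polynomial.natDegree_sub_le _ _)
      simp [Polynomial.natDegree_C, Polynomial.natDegree_X]
  obtain ⟨f, hf⟩ := kraw_span n q hq s' P hPdeg
  have hF0 : P.eval 0 = ∏ α ∈ S, (α:ℝ) := by
    rw [hP, Polynomial.eval_prod]
    apply Finset.prod_congr rfl
    intro α _
    simp
  have hF0pos : 0 < P.eval 0 := by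
    rw [hF0]
    apply Finset.prod_pos
    intro α hα
    have := (hSsub α hα).1
    have : (1:ℝ) ≤ (α:ℝ) := by exact_mod_cast this
    linarith
  have hFS : ∀ α ∈ S, P.eval (α:ℝ) = 0 := by
    intro α hα
    rw [hP, Polynomial.eval_prod]
    apply Finset.prod_eq_zero hα
    simp
  set Su : (Fin n → Fin q) → ℂ := fun u => ∑ c ∈ C, eC q (dotP u c) with hSu
  set Sig : ℂ := ∑ u : Fin n → Fin q,
    ((P.eval ((hammingNorm u : ℕ) : ℝ) : ℝ) : ℂ) * eC q (dotP u x) * (starRingEnd ℂ) (Su u)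
    with hSig
  -- Way 1 : only u = 0 contributes
  have way1 : Sig = ((P.eval 0 : ℝ) : ℂ) * (C.card : ℂ) := by
    rw [hSig]
    rw [Finset.sum_eq_single (0 : Fin n → Fin q)]
    · have h1 : hammingNorm (0 : Fin n → Fin q) = 0 := by simp
      have h3 : Su 0 = (C.card : ℂ) := by
        rw [hSu]
        simp only
        rw [Finset.sum_congr rfl (fun c _ => by rw [dotP_zero_left, eC_zero]),
          Finset.sum_const, nsmul_eq_mul, mul_one]
      rw [h1, dotP_zero_left, h3, eC_zero]
      simp
    · intro u _ hu
      have h1 : 1 ≤ hammingNorm u := by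
        rcases Nat.eq_zero_or_pos (hammingNorm u) with h | h
        · exact absurd (hammingNorm_eq_zero.mp h) hu
        · omega
      have h2 : hammingNorm u ≤ n := hammingNorm_le u
      by_cases hB : dualDistDistrib C (hammingNorm u) = 0
      · have hz := Szero n q hq C hC (hammingNorm u) h2 hB u rfl
        have : Su u = 0 := by rw [hSu]; exact hz
        rw [this]
        simp
      · have hmem : hammingNorm u ∈ S := by
          rw [hS]
          exact Finset.mem_filter.mpr ⟨Finset.mem_Icc.mpr ⟨h1, h2⟩, hB⟩
        rw [hFS _ hmem]
        simp
    · intro h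
      exact absurd (Finset.mem_univ _) h
  -- Way 2 : Sig = 0
  have way2 : Sig = 0 := by
    rw [hSig]
    have e1 : ∀ u : Fin n → Fin q, ((P.eval ((hammingNorm u : ℕ) : ℝ) : ℝ) : ℂ)
        = ∑ j ∈ range (s'+1), ((f j : ℝ) : ℂ) * ((kraw n q j ((hammingNorm u : ℕ) : ℝ) : ℝ) : ℂ) := by
      intro u
      rw [hf]
      push_cast
      rfl
    have e2 : (∑ u : Fin n → Fin q,
          ((P.eval ((hammingNorm u : ℕ) : ℝ) : ℝ) : ℂ) * eC q (dotP u x) * (starRingEnd ℂ) (Su u))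
        = ∑ j ∈ range (s'+1), ((f j : ℝ) : ℂ) *
            ∑ u : Fin n → Fin q,
              ((kraw n q j ((hammingNorm u : ℕ) : ℝ) : ℝ) : ℂ) * eC q (dotP u x) *
                (starRingEnd ℂ) (Su u) := by
      rw [Finset.sum_congr rfl (fun u _ => by
        rw [e1 u, Finset.sum_mul, Finset.sum_mul])]
      rw [Finset.sum_comm]
      apply Finset.sum_congr rfl
      intro j _
      rw [Finset.mul_sum]
      apply Finset.sum_congr rfl
      intro u _
      ring
    rw [e2]
    apply Finset.sum_eq_zero
    intro j hj
    rw [Finset.mem_range] at hj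
    have hjn : j ≤ n := by omega
    have e3 : ∀ u : Fin n → Fin q, ((kraw n q j ((hammingNorm u : ℕ) : ℝ) : ℝ) : ℂ)
        = ∑ w ∈ univ.filter (fun w : Fin n → Fin q => hammingNorm w = j), eC q (dotP w u) := by
      intro u
      have h := char_sum' n q hq j hjn u 0
      rw [hammingDist_zero_right] at h
      rw [← h]
      apply Finset.sum_congr rfl
      intro w _
      rw [dotP_zero_right w]
      norm_num
    have inner : (∑ u : Fin n → Fin q,
        ((kraw n q j ((hammingNorm u : ℕ) : ℝ) : ℝ) : ℂ) * eC q (dotP u x) *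
          (starRingEnd ℂ) (Su u)) = 0 := by
      have hu : ∀ u : Fin n → Fin q,
          ((kraw n q j ((hammingNorm u : ℕ) : ℝ) : ℝ) : ℂ) * eC q (dotP u x) *
            (starRingEnd ℂ) (Su u)
          = ∑ w ∈ univ.filter (fun w : Fin n → Fin q => hammingNorm w = j),
              ∑ c ∈ C, eC q (dotP w u + (dotP u x - dotP u c)) := by
        intro u
        rw [e3 u, hSu]
        simp only [map_sum]
        rw [Finset.sum_mul, Finset.sum_mul]
        apply Finset.sum_congr rfl
        intro w _
        rw [Finset.mul_sum]
        apply Finset.sum_congr rfl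
        intro c _
        rw [eC_conj, ← eC_add, ← eC_add]
        congr 1
        ring
      rw [Finset.sum_congr rfl (fun u _ => hu u), Finset.sum_comm]
      apply Finset.sum_eq_zero
      intro w hw
      rw [Finset.mem_filter] at hw
      rw [Finset.sum_comm]
      have hcval : ∀ c ∈ C,
          (∑ u : Fin n → Fin q, eC q (dotP w u + (dotP u x - dotP u c)))
          = if x + w = c then ((q:ℂ))^n else 0 := by
        intro c _
        have harg : ∀ u : Fin n → Fin q,
            eC q (dotP w u + (dotP u x - dotP u c)) = eC q (dotP u (x + w) - dotP u c) := by
          intro u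
          apply eC_congr
          have h1 := dotP_add_congr u x w
          have heq : (dotP w u + (dotP u x - dotP u c)) - (dotP u (x + w) - dotP u c)
              = -(dotP u (x + w) - (dotP u x + dotP u w)) := by
            rw [dotP_comm w u]
            ring
          rw [heq]
          exact dvd_neg.mpr h1
        rw [Finset.sum_congr rfl (fun u _ => harg u)]
        exact delta_sum n q hq (x + w) c
      rw [Finset.sum_congr rfl hcval]
      rw [Finset.sum_ite_eq C (x + w) (fun _ => ((q:ℂ))^n)]
      rw [if_neg]
      intro hmem
      have hd := hcon (x + w) hmem
      rw [hd_add_right, hw.2] at hd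
      omega
    rw [inner, mul_zero]
  rw [way2] at way1
  have hne : ((P.eval 0 : ℝ) : ℂ) * (C.card : ℂ) ≠ 0 := by
    apply mul_ne_zero
    · exact_mod_cast ne_of_gt hF0pos
    · have h : 0 < C.card := Finset.card_pos.mpr hC
      exact_mod_cast Nat.cast_ne_zero.mpr (by omega : C.card ≠ 0)
  exact hne way1.symm
end

section
/- LP bound for spherical codes: let n ≥ 2, s ∈ [-1,1), and f a real polynomial such that f(t) ≤ 0 for all t ∈ [-1,s] and whose Gegenbauer expansion f = Σ f_i P_i^{(n)} satisfies f_0 > 0 and f_i ≥ 0 for all i ≥ 1. Then every finite set C ⊂ S^{n-1} with ⟨x,y⟩ ≤ s for all distinct x,y ∈ C has |C| ≤ f(1)/f_0. -/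
open Finset

/-- The Gegenbauer polynomials `P_i^{(n)}(t)` normalized by `P_i^{(n)}(1) = 1`,
defined by the recurrence `(i+n-2) P_{i+1} = (2i+n-2) t P_i - i P_{i-1}`. -/
noncomputable def geg (n : ℕ) : ℕ → ℝ → ℝ
  | 0, _ => 1
  | 1, t => t
  | (i + 2), t =>
      ((2 * ((i : ℝ) + 1) + (n : ℝ) - 2) * t * geg n (i + 1) t
        - ((i : ℝ) + 1) * geg n i t) / (((i : ℝ) + 1) + (n : ℝ) - 2)

open scoped RealInnerProductSpace

section Helpers
open MvPolynomial

variable {n : ℕ}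


noncomputable def wt (α : Fin n →₀ ℕ) : ℝ := ∏ a : Fin n, ((α a).factorial : ℝ)

lemma wt_nonneg (α : Fin n →₀ ℕ) : 0 ≤ wt α :=
  Finset.prod_nonneg fun _ _ => by positivity

lemma wt_zero : wt (0 : Fin n →₀ ℕ) = 1 := by simp [wt]

lemma wt_add_single (β : Fin n →₀ ℕ) (a : Fin n) :
    wt (β + Finsupp.single a 1) = wt β * ((β a : ℝ) + 1) := by
  unfold wt
  rw [← Finset.mul_prod_erase Finset.univ _ (Finset.mem_univ a),
      ← Finset.mul_prod_erase Finset.univ (fun i => ((β i).factorial : ℝ)) (Finset.mem_univ a)]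
  have h1 : ((β + Finsupp.single a 1 : Fin n →₀ ℕ)) a = β a + 1 := by
    rw [Finsupp.add_apply, Finsupp.single_apply]; simp
  have h2 : ∀ i ∈ Finset.univ.erase a, ((((β + Finsupp.single a 1 : Fin n →₀ ℕ)) i).factorial : ℝ)
      = ((β i).factorial : ℝ) := by
    intro i hi
    have hne : i ≠ a := (Finset.mem_erase.mp hi).1
    rw [Finsupp.add_apply, Finsupp.single_apply, if_neg (fun h => hne h.symm)]
    simp
  rw [Finset.prod_congr rfl h2, h1]
  push_cast [Nat.factorial_succ]
  ring

noncomputable def fisch (p q : MvPolynomial (Fin n) ℝ) : ℝ :=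
  ∑ α ∈ p.support ∪ q.support, wt α * p.coeff α * q.coeff α

lemma fisch_eq_sum {p q : MvPolynomial (Fin n) ℝ} {s : Finset (Fin n →₀ ℕ)}
    (hs : p.support ∪ q.support ⊆ s) :
    fisch p q = ∑ α ∈ s, wt α * p.coeff α * q.coeff α := by
  refine Finset.sum_subset hs fun α _ hα => ?_
  rcases Finset.notMem_union.mp hα with ⟨h1, _⟩
  rw [MvPolynomial.notMem_support_iff.mp h1]; ring

lemma fisch_comm (p q : MvPolynomial (Fin n) ℝ) : fisch p q = fisch q p := by
  rw [fisch, fisch_eq_sum (s := p.support ∪ q.support) (by rw [Finset.union_comm])]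
  exact Finset.sum_congr rfl fun α _ => by ring

lemma fisch_nonneg (p : MvPolynomial (Fin n) ℝ) : 0 ≤ fisch p p :=
  Finset.sum_nonneg fun α _ => by
    rw [mul_assoc]; exact mul_nonneg (wt_nonneg α) (mul_self_nonneg _)

lemma fisch_add_left (p p' q : MvPolynomial (Fin n) ℝ) :
    fisch (p + p') q = fisch p q + fisch p' q := by
  set s := (p + p').support ∪ p.support ∪ p'.support ∪ q.support with hs
  rw [fisch_eq_sum (s := s) (by intro x hx; simp only [hs, Finset.mem_union] at *; tauto),
      fisch_eq_sum (s := s) (by intro x hx; simp only [hs, Finset.mem_union] at *; tauto),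
      fisch_eq_sum (s := s) (by intro x hx; simp only [hs, Finset.mem_union] at *; tauto),
      ← Finset.sum_add_distrib]
  exact Finset.sum_congr rfl fun α _ => by rw [MvPolynomial.coeff_add]; ring

lemma fisch_smul_left (r : ℝ) (p q : MvPolynomial (Fin n) ℝ) :
    fisch (r • p) q = r * fisch p q := by
  rw [fisch_eq_sum (s := p.support ∪ q.support)
      (Finset.union_subset_union_left (MvPolynomial.support_smul)), fisch, Finset.mul_sum]
  exact Finset.sum_congr rfl fun α _ => by
    rw [MvPolynomial.coeff_smul, smul_eq_mul]; ring

lemma fisch_zero_left (q : MvPolynomial (Fin n) ℝ) : fisch 0 q = 0 := by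
  have := fisch_smul_left 0 0 q; simpa using this

lemma fisch_add_right (p q q' : MvPolynomial (Fin n) ℝ) :
    fisch p (q + q') = fisch p q + fisch p q' := by
  rw [fisch_comm, fisch_add_left, fisch_comm q p, fisch_comm q' p]

lemma fisch_smul_right (r : ℝ) (p q : MvPolynomial (Fin n) ℝ) :
    fisch p (r • q) = r * fisch p q := by
  rw [fisch_comm, fisch_smul_left, fisch_comm]

lemma fisch_sum_left {ι : Type*} (t : Finset ι) (f : ι → MvPolynomial (Fin n) ℝ)
    (q : MvPolynomial (Fin n) ℝ) :
    fisch (∑ i ∈ t, f i) q = ∑ i ∈ t, fisch (f i) q := by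
  induction t using Finset.cons_induction with
  | empty => simpa using fisch_zero_left q
  | cons a t' h ih => rw [Finset.sum_cons, Finset.sum_cons, fisch_add_left, ih]

lemma fisch_monomial_left (β : Fin n →₀ ℕ) (c : ℝ) (q : MvPolynomial (Fin n) ℝ) :
    fisch (monomial β c) q = wt β * c * q.coeff β := by
  by_cases hc : c = 0
  · subst hc; rw [show (monomial β (0:ℝ)) = 0 by simp, fisch_zero_left]; ring
  · have hmem : β ∈ (monomial β c).support ∪ q.support := by
      simp [MvPolynomial.support_monomial, hc]
    rw [fisch, Finset.sum_eq_single_of_mem β hmem]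
    · rw [MvPolynomial.coeff_monomial]; simp
    · intro α _ hαβ
      rw [MvPolynomial.coeff_monomial, if_neg (fun h => hαβ h.symm)]; ring

lemma pderiv_pderiv_comm (a b : Fin n) (p : MvPolynomial (Fin n) ℝ) :
    pderiv a (pderiv b p) = pderiv b (pderiv a p) := by
  induction p using MvPolynomial.induction_on with
  | C c => simp [pderiv_C]
  | add p q hp hq => simp [map_add, hp, hq]
  | mul_X p i hp =>
      simp only [pderiv_mul, map_add, pderiv_X, hp, Pi.single_apply]
      by_cases hai : i = a <;> by_cases hbi : i = b <;>
        simp [hai, hbi, hp] <;> split_ifs <;> simp <;> ring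

lemma coeff_pderiv (a : Fin n) (β : Fin n →₀ ℕ) (q : MvPolynomial (Fin n) ℝ) :
    coeff β (pderiv a q) = ((β a : ℝ) + 1) * coeff (β + Finsupp.single a 1) q := by
  induction q using MvPolynomial.induction_on' with
  | add p q hp hq => simp [map_add, hp, hq]; ring
  | monomial γ d =>
      rw [pderiv_monomial, coeff_monomial, coeff_monomial]
      by_cases hγa : γ a = 0
      · rw [hγa]
        have : ¬ (γ = β + Finsupp.single a 1) := by
          intro h; rw [h] at hγa; simp [Finsupp.add_apply] at hγa
        simp [this]
      · by_cases heq : γ = β + Finsupp.single a 1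
        · have h1 : γ - Finsupp.single a 1 = β := by
            rw [heq]; exact add_tsub_cancel_right _ _
          have h2 : γ a = β a + 1 := by rw [heq]; simp
          simp [h1, heq, h2]; ring
        · have : ¬ (γ - Finsupp.single a 1 = β) := by
            intro h
            apply heq
            rw [← h, tsub_add_cancel_of_le]
            rw [Finsupp.single_le_iff]
            omega
          simp [this, heq]

lemma fisch_X_adj (a : Fin n) (p q : MvPolynomial (Fin n) ℝ) :
    fisch (X a * p) q = fisch p (pderiv a q) := by
  conv_lhs => rw [p.as_sum, Finset.mul_sum]
  conv_rhs => rw [p.as_sum]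
  rw [fisch_sum_left, fisch_sum_left]
  refine Finset.sum_congr rfl fun β _ => ?_
  have hXm : X a * monomial β (coeff β p) = monomial (β + Finsupp.single a 1) (coeff β p) := by
    rw [X, monomial_mul, one_mul, add_comm]
  rw [hXm, fisch_monomial_left, fisch_monomial_left, coeff_pderiv, wt_add_single]
  ring

-- operators
noncomputable def Lf (x : Fin n → ℝ) : MvPolynomial (Fin n) ℝ := ∑ a, C (x a) * X a
noncomputable def Rf : MvPolynomial (Fin n) ℝ := ∑ a : Fin n, X a ^ 2
noncomputable def lap (p : MvPolynomial (Fin n) ℝ) : MvPolynomial (Fin n) ℝ :=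
  ∑ a, pderiv a (pderiv a p)
noncomputable def Dop (x : Fin n → ℝ) (p : MvPolynomial (Fin n) ℝ) : MvPolynomial (Fin n) ℝ :=
  ∑ a, x a • pderiv a p
noncomputable def Eop (p : MvPolynomial (Fin n) ℝ) : MvPolynomial (Fin n) ℝ :=
  ∑ a, X a * pderiv a p

lemma pderiv_Lf (a : Fin n) (x : Fin n → ℝ) : pderiv a (Lf x) = C (x a) := by
  rw [Lf, map_sum]
  rw [Finset.sum_eq_single_of_mem a (Finset.mem_univ a)]
  · simp
  · intro b _ hba; simp [pderiv_X, Pi.single_apply, hba.symm]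

lemma pderiv_Rf (a : Fin n) : pderiv a (Rf : MvPolynomial (Fin n) ℝ) = 2 * X a := by
  rw [Rf, map_sum]
  rw [Finset.sum_eq_single_of_mem a (Finset.mem_univ a)]
  · simp [pow_two, pderiv_mul]; ring
  · intro b _ hba; simp [pow_two, pderiv_mul, pderiv_X, Pi.single_apply, hba.symm]

lemma fisch_Lf_adj (x : Fin n → ℝ) (p q : MvPolynomial (Fin n) ℝ) :
    fisch (Lf x * p) q = fisch p (Dop x q) := by
  have hsr : ∀ (t : Finset (Fin n)) (f : Fin n → MvPolynomial (Fin n) ℝ),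
      fisch p (∑ a ∈ t, f a) = ∑ a ∈ t, fisch p (f a) := by
    intro t f
    rw [fisch_comm, fisch_sum_left]
    exact Finset.sum_congr rfl fun a _ => fisch_comm _ _
  rw [Lf, Finset.sum_mul, fisch_sum_left, Dop, hsr]
  refine Finset.sum_congr rfl fun a _ => ?_
  rw [mul_assoc, ← smul_eq_C_mul, fisch_smul_left, fisch_X_adj, fisch_smul_right]

lemma fisch_sum_right (p : MvPolynomial (Fin n) ℝ) {ι : Type*} (t : Finset ι)
    (f : ι → MvPolynomial (Fin n) ℝ) :
    fisch p (∑ i ∈ t, f i) = ∑ i ∈ t, fisch p (f i) := by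
  rw [fisch_comm, fisch_sum_left]
  exact Finset.sum_congr rfl fun a _ => fisch_comm _ _

lemma fisch_Rf_adj (p q : MvPolynomial (Fin n) ℝ) :
    fisch (Rf * p) q = fisch p (lap q) := by
  rw [Rf, Finset.sum_mul, fisch_sum_left, lap, fisch_sum_right]
  refine Finset.sum_congr rfl fun a _ => ?_
  rw [pow_two, mul_assoc, fisch_X_adj, fisch_X_adj]

lemma fisch_one_left (q : MvPolynomial (Fin n) ℝ) :
    fisch 1 q = constantCoeff q := by
  have h1 : (1 : MvPolynomial (Fin n) ℝ) = monomial 0 1 := by simp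
  rw [h1, fisch_monomial_left]
  have : wt (0 : Fin n →₀ ℕ) = 1 := by simp [wt]
  rw [this]
  simp [constantCoeff_eq]

-- linearity of operators
lemma lap_add (p q : MvPolynomial (Fin n) ℝ) : lap (p + q) = lap p + lap q := by
  simp [lap, map_add, Finset.sum_add_distrib]
lemma lap_smul (r : ℝ) (p : MvPolynomial (Fin n) ℝ) : lap (r • p) = r • lap p := by
  simp [lap, map_smul, Finset.smul_sum]
lemma lap_sub (p q : MvPolynomial (Fin n) ℝ) : lap (p - q) = lap p - lap q := by
  simp [lap, map_sub, Finset.sum_sub_distrib]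
lemma Eop_add (p q : MvPolynomial (Fin n) ℝ) : Eop (p + q) = Eop p + Eop q := by
  simp [Eop, map_add, mul_add, Finset.sum_add_distrib]
lemma Eop_smul (r : ℝ) (p : MvPolynomial (Fin n) ℝ) : Eop (r • p) = r • Eop p := by
  simp [Eop, map_smul, Finset.smul_sum, mul_smul_comm]
lemma Eop_sub (p q : MvPolynomial (Fin n) ℝ) : Eop (p - q) = Eop p - Eop q := by
  simp [Eop, map_sub, mul_sub, Finset.sum_sub_distrib]
lemma Dop_add (x : Fin n → ℝ) (p q : MvPolynomial (Fin n) ℝ) :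
    Dop x (p + q) = Dop x p + Dop x q := by
  simp [Dop, map_add, smul_add, Finset.sum_add_distrib]
lemma Dop_smul (x : Fin n → ℝ) (r : ℝ) (p : MvPolynomial (Fin n) ℝ) :
    Dop x (r • p) = r • Dop x p := by
  simp [Dop, map_smul, Finset.smul_sum, smul_comm r]
lemma Dop_sub (x : Fin n → ℝ) (p q : MvPolynomial (Fin n) ℝ) :
    Dop x (p - q) = Dop x p - Dop x q := by
  simp [Dop, map_sub, smul_sub, Finset.sum_sub_distrib]


-- product rules
lemma lap_L_mul (x : Fin n → ℝ) (p : MvPolynomial (Fin n) ℝ) :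
    lap (Lf x * p) = Lf x * lap p + (2:ℝ) • Dop x p := by
  unfold lap Dop
  rw [Finset.mul_sum, Finset.smul_sum, ← Finset.sum_add_distrib]
  refine Finset.sum_congr rfl fun a _ => ?_
  have h1 : pderiv a (Lf x * p) = C (x a) * p + Lf x * pderiv a p := by
    rw [pderiv_mul, pderiv_Lf]
  rw [h1, map_add, pderiv_mul, pderiv_C, pderiv_mul, pderiv_Lf]
  rw [smul_eq_C_mul, smul_eq_C_mul]
  simp only [map_ofNat]
  ring

lemma lap_R_mul (p : MvPolynomial (Fin n) ℝ) :
    lap (Rf * p) = Rf * lap p + (4:ℝ) • Eop p + ((2 * n : ℝ)) • p := by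
  unfold lap Eop
  rw [Finset.mul_sum, Finset.smul_sum, ← Finset.sum_add_distrib]
  have hn : ((2 * n : ℝ)) • p = ∑ _a : Fin n, (2:ℝ) • p := by
    rw [Finset.sum_const, Finset.card_univ, Fintype.card_fin,
        ← Nat.cast_smul_eq_nsmul ℝ n ((2:ℝ) • p), smul_smul]
    ring_nf
  rw [hn, ← Finset.sum_add_distrib]
  refine Finset.sum_congr rfl fun a _ => ?_
  have hXa : pderiv a (2 * X a : MvPolynomial (Fin n) ℝ) = 2 := by
    have h2 : (2 * X a : MvPolynomial (Fin n) ℝ) = C 2 * X a := by rw [map_ofNat]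
    rw [h2, pderiv_mul, pderiv_C, pderiv_X]
    simp
    exact (map_ofNat C 2).symm
  have h1 : pderiv a (Rf * p) = 2 * X a * p + Rf * pderiv a p := by
    rw [pderiv_mul, pderiv_Rf]
  rw [h1, map_add, pderiv_mul, hXa, pderiv_mul, pderiv_Rf]
  rw [smul_eq_C_mul, smul_eq_C_mul]
  simp only [map_ofNat]
  ring

lemma Eop_L_mul (x : Fin n → ℝ) (p : MvPolynomial (Fin n) ℝ) :
    Eop (Lf x * p) = Lf x * p + Lf x * Eop p := by
  unfold Eop
  rw [Finset.mul_sum]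
  have h : ∀ a ∈ (Finset.univ : Finset (Fin n)), X a * pderiv a (Lf x * p)
      = C (x a) * X a * p + Lf x * (X a * pderiv a p) := by
    intro a _
    rw [pderiv_mul, pderiv_Lf]
    ring
  rw [Finset.sum_congr rfl h, Finset.sum_add_distrib]
  congr 1
  rw [Lf, Finset.sum_mul]

lemma Eop_R_mul (p : MvPolynomial (Fin n) ℝ) :
    Eop (Rf * p) = (2:ℝ) • (Rf * p) + Rf * Eop p := by
  unfold Eop
  rw [Finset.mul_sum]
  have h : ∀ a ∈ (Finset.univ : Finset (Fin n)), X a * pderiv a (Rf * p)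
      = (2:ℝ) • (X a ^ 2 * p) + Rf * (X a * pderiv a p) := by
    intro a _
    rw [pderiv_mul, pderiv_Rf, smul_eq_C_mul]
    simp only [map_ofNat]
    ring
  rw [Finset.sum_congr rfl h, Finset.sum_add_distrib]
  congr 1
  rw [Rf, Finset.sum_mul, Finset.smul_sum]

lemma Dop_L_mul (x : Fin n → ℝ) (hx : ∑ a, x a ^ 2 = 1) (p : MvPolynomial (Fin n) ℝ) :
    Dop x (Lf x * p) = p + Lf x * Dop x p := by
  unfold Dop
  rw [Finset.mul_sum]
  have h : ∀ a ∈ (Finset.univ : Finset (Fin n)), x a • pderiv a (Lf x * p)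
      = (x a ^ 2) • p + Lf x * (x a • pderiv a p) := by
    intro a _
    rw [pderiv_mul, pderiv_Lf, smul_add, smul_eq_C_mul, smul_eq_C_mul, smul_eq_C_mul,
        smul_eq_C_mul, map_pow]
    ring
  rw [Finset.sum_congr rfl h, Finset.sum_add_distrib]
  congr 1
  rw [← Finset.sum_smul, hx, one_smul]

lemma Dop_R_mul (x : Fin n → ℝ) (p : MvPolynomial (Fin n) ℝ) :
    Dop x (Rf * p) = (2:ℝ) • (Lf x * p) + Rf * Dop x p := by
  unfold Dop
  rw [Finset.mul_sum]
  have h : ∀ a ∈ (Finset.univ : Finset (Fin n)), x a • pderiv a (Rf * p)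
      = (2:ℝ) • (C (x a) * X a * p) + Rf * (x a • pderiv a p) := by
    intro a _
    rw [pderiv_mul, pderiv_Rf, smul_add, smul_eq_C_mul, smul_eq_C_mul, smul_eq_C_mul,
        smul_eq_C_mul]
    simp only [map_ofNat]
    ring
  rw [Finset.sum_congr rfl h, Finset.sum_add_distrib]
  congr 1
  rw [Lf, Finset.sum_mul, Finset.smul_sum]

lemma Eop_L (x : Fin n → ℝ) : Eop (Lf x) = Lf x := by
  have := Eop_L_mul x (1 : MvPolynomial (Fin n) ℝ)
  have h0 : Eop (1 : MvPolynomial (Fin n) ℝ) = 0 := by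
    unfold Eop; simp [pderiv_one]
  rw [mul_one, h0, mul_zero, add_zero] at this
  exact this

lemma lap_one : lap (1 : MvPolynomial (Fin n) ℝ) = 0 := by
  unfold lap; simp [pderiv_one]

lemma Eop_one : Eop (1 : MvPolynomial (Fin n) ℝ) = 0 := by
  unfold Eop; simp [pderiv_one]

lemma Dop_one (x : Fin n → ℝ) : Dop x (1 : MvPolynomial (Fin n) ℝ) = 0 := by
  unfold Dop; simp [pderiv_one]

lemma lap_L (x : Fin n → ℝ) : lap (Lf x) = 0 := by
  have := lap_L_mul x (1 : MvPolynomial (Fin n) ℝ)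
  rw [mul_one, lap_one, mul_zero, Dop_one, smul_zero, add_zero] at this
  exact this

lemma Dop_L (x : Fin n → ℝ) (hx : ∑ a, x a ^ 2 = 1) : Dop x (Lf x) = 1 := by
  have := Dop_L_mul x hx (1 : MvPolynomial (Fin n) ℝ)
  rw [mul_one, Dop_one x, mul_zero, add_zero] at this
  exact this

-- sums
lemma Eop_zero : Eop (0 : MvPolynomial (Fin n) ℝ) = 0 := by unfold Eop; simp
lemma lap_zero : lap (0 : MvPolynomial (Fin n) ℝ) = 0 := by unfold lap; simp
lemma Dop_zero (x : Fin n → ℝ) : Dop x (0 : MvPolynomial (Fin n) ℝ) = 0 := by unfold Dop; simp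

lemma Eop_sum {ι : Type*} (t : Finset ι) (f : ι → MvPolynomial (Fin n) ℝ) :
    Eop (∑ i ∈ t, f i) = ∑ i ∈ t, Eop (f i) := by
  induction t using Finset.cons_induction with
  | empty => simpa using Eop_zero
  | cons a t' h ih => rw [Finset.sum_cons, Finset.sum_cons, Eop_add, ih]

lemma lap_sum {ι : Type*} (t : Finset ι) (f : ι → MvPolynomial (Fin n) ℝ) :
    lap (∑ i ∈ t, f i) = ∑ i ∈ t, lap (f i) := by
  induction t using Finset.cons_induction with
  | empty => simpa using lap_zero
  | cons a t' h ih => rw [Finset.sum_cons, Finset.sum_cons, lap_add, ih]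

-- commutator
lemma pderiv_Eop (a : Fin n) (q : MvPolynomial (Fin n) ℝ) :
    pderiv a (Eop q) = pderiv a q + Eop (pderiv a q) := by
  unfold Eop
  rw [map_sum]
  have h : ∀ b ∈ (Finset.univ : Finset (Fin n)), pderiv a (X b * pderiv b q)
      = (if b = a then pderiv b q else 0) + X b * pderiv b (pderiv a q) := by
    intro b _
    rw [pderiv_mul, pderiv_X, pderiv_pderiv_comm]
    congr 1
    rw [Pi.single_apply]
    by_cases hba : b = a
    · subst hba; simp
    · simp [hba]
  rw [Finset.sum_congr rfl h, Finset.sum_add_distrib]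
  congr 1
  rw [Finset.sum_ite_eq' Finset.univ a (fun b => pderiv b q)]
  simp

lemma Eop_Dop (x : Fin n → ℝ) (q : MvPolynomial (Fin n) ℝ) :
    Eop (Dop x q) = Dop x (Eop q) - Dop x q := by
  unfold Dop
  rw [Eop_sum, ← Finset.sum_sub_distrib]
  refine Finset.sum_congr rfl fun a _ => ?_
  rw [Eop_smul, pderiv_Eop, smul_add]
  ring

lemma lap_pderiv (a : Fin n) (q : MvPolynomial (Fin n) ℝ) :
    lap (pderiv a q) = pderiv a (lap q) := by
  unfold lap
  rw [map_sum]
  refine Finset.sum_congr rfl fun b _ => ?_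
  rw [pderiv_pderiv_comm b a q, pderiv_pderiv_comm b a (pderiv b q)]

lemma lap_Dop (x : Fin n → ℝ) (q : MvPolynomial (Fin n) ℝ) (hq : lap q = 0) :
    lap (Dop x q) = 0 := by
  unfold Dop
  rw [lap_sum]
  have h : ∀ a ∈ (Finset.univ : Finset (Fin n)), lap (x a • pderiv a q) = 0 := by
    intro a _
    rw [lap_smul, lap_pderiv, hq, map_zero, smul_zero]
  rw [Finset.sum_congr rfl h, Finset.sum_const, smul_zero]

noncomputable def Zp (x : Fin n → ℝ) : ℕ → MvPolynomial (Fin n) ℝ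
  | 0 => 1
  | 1 => Lf x
  | (i+2) => (((i:ℝ)+1)+(n:ℝ)-2)⁻¹ •
      ((2*((i:ℝ)+1)+(n:ℝ)-2) • (Lf x * Zp x (i+1)) - ((i:ℝ)+1) • (Rf * Zp x i))

lemma czero (hn : 2 ≤ n) (i : ℕ) : (((i:ℝ)+1)+(n:ℝ)-2) ≠ 0 := by
  have : (2:ℝ) ≤ (n:ℝ) := by exact_mod_cast hn
  have h0 : (0:ℝ) ≤ (i:ℝ) := Nat.cast_nonneg i
  nlinarith

lemma Zp_rec (hn : 2 ≤ n) (x : Fin n → ℝ) (i : ℕ) :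
    (((i:ℝ)+1)+(n:ℝ)-2) • Zp x (i+2) =
      (2*((i:ℝ)+1)+(n:ℝ)-2) • (Lf x * Zp x (i+1)) - ((i:ℝ)+1) • (Rf * Zp x i) := by
  rw [show Zp x (i+2) = (((i:ℝ)+1)+(n:ℝ)-2)⁻¹ •
      ((2*((i:ℝ)+1)+(n:ℝ)-2) • (Lf x * Zp x (i+1)) - ((i:ℝ)+1) • (Rf * Zp x i)) from rfl,
    smul_inv_smul₀ (czero hn i)]

lemma mulL (hn : 2 ≤ n) (x : Fin n → ℝ) (i : ℕ) :
    (2*(i:ℝ)+(n:ℝ)-2) • (Lf x * Zp x i) =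
      ((i:ℝ)+(n:ℝ)-2) • Zp x (i+1) + (i:ℝ) • (Rf * Zp x (i-1)) := by
  cases i with
  | zero =>
      simp only [Nat.cast_zero, Nat.zero_sub]
      rw [show Zp x 0 = 1 from rfl, show Zp x 1 = Lf x from rfl, mul_one]
      module
  | succ k =>
      have h := Zp_rec hn x k
      push_cast
      linear_combination (norm := module) -h

lemma smul_cancel {c : ℝ} (hc : c ≠ 0) {u v : MvPolynomial (Fin n) ℝ}
    (h : c • u = c • v) : u = v := by
  have h2 := congrArg (fun w => c⁻¹ • w) h
  simpa [smul_smul, inv_mul_cancel₀ hc] using h2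

lemma Zp_props (hn : 2 ≤ n) (x : Fin n → ℝ) (hx : ∑ a, x a ^ 2 = 1) : ∀ i : ℕ,
    lap (Zp x i) = 0 ∧ Eop (Zp x i) = (i:ℝ) • Zp x i ∧
      Dop x (Zp x i) = (i:ℝ) • Zp x (i-1) := by
  have key : ∀ i : ℕ, (lap (Zp x i) = 0 ∧ Eop (Zp x i) = (i:ℝ) • Zp x i ∧
      Dop x (Zp x i) = (i:ℝ) • Zp x (i-1)) ∧
      (lap (Zp x (i+1)) = 0 ∧ Eop (Zp x (i+1)) = ((i:ℝ)+1) • Zp x (i+1) ∧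
      Dop x (Zp x (i+1)) = ((i:ℝ)+1) • Zp x i) := by
    intro i
    induction i with
    | zero =>
        refine ⟨⟨lap_one, ?_, ?_⟩, ?_, ?_, ?_⟩
        · rw [show Zp x 0 = 1 from rfl, Eop_one]; module
        · rw [show Zp x 0 = 1 from rfl, Dop_one]; module
        · exact lap_L x
        · rw [show Zp x 1 = Lf x from rfl, Eop_L]; module
        · rw [show Zp x 1 = Lf x from rfl, show Zp x 0 = 1 from rfl, Dop_L x hx]; module
    | succ i ih =>
        obtain ⟨⟨hlap0, hE0, hD0⟩, hlap1, hE1, hD1⟩ := ih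
        have hc := czero (n := n) hn i
        have hrec := Zp_rec hn x i
        refine ⟨⟨hlap1, by push_cast; exact hE1, by
          rw [Nat.add_sub_cancel]; push_cast; exact hD1⟩, ?_, ?_, ?_⟩
        · -- lap (Zp x (i+2)) = 0
          refine smul_cancel hc ?_
          show (((i:ℝ)+1)+(n:ℝ)-2) • lap (Zp x (i+2))
              = (((i:ℝ)+1)+(n:ℝ)-2) • (0 : MvPolynomial (Fin n) ℝ)
          have h3 := congrArg lap hrec
          rw [lap_smul, lap_sub, lap_smul, lap_smul, lap_L_mul, lap_R_mul,
              hlap1, hlap0, hD1, hE0, mul_zero, mul_zero] at h3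
          rw [h3, smul_zero]
          module
        · -- Eop
          refine smul_cancel hc ?_
          show (((i:ℝ)+1)+(n:ℝ)-2) • Eop (Zp x (i+2))
              = (((i:ℝ)+1)+(n:ℝ)-2) • ((((i+1:ℕ):ℝ)+1) • Zp x (i+2))
          have h3 := congrArg Eop hrec
          rw [Eop_smul, Eop_sub, Eop_smul, Eop_smul, Eop_L_mul, Eop_R_mul,
              hE1, hE0, mul_smul_comm, mul_smul_comm] at h3
          push_cast
          rw [h3]
          linear_combination (norm := module) (-((i:ℝ)+2)) • hrec
        · -- Dop
          refine smul_cancel hc ?_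
          show (((i:ℝ)+1)+(n:ℝ)-2) • Dop x (Zp x (i+2))
              = (((i:ℝ)+1)+(n:ℝ)-2) • ((((i+1:ℕ):ℝ)+1) • Zp x (i+1))
          have h3 := congrArg (Dop x) hrec
          rw [Dop_smul, Dop_sub, Dop_smul, Dop_smul, Dop_L_mul x hx, Dop_R_mul,
              hD1, hD0, mul_smul_comm, mul_smul_comm] at h3
          have hm := mulL hn x i
          push_cast
          rw [h3]
          linear_combination (norm := module) (((i:ℝ)+1)) • hm
  intro i
  exact (key i).1

lemma eval_Lf (x y : Fin n → ℝ) : eval y (Lf x) = ∑ a, x a * y a := by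
  rw [Lf, map_sum]
  exact Finset.sum_congr rfl fun a _ => by simp

lemma eval_Rf (y : Fin n → ℝ) : eval y (Rf : MvPolynomial (Fin n) ℝ) = ∑ a, y a ^ 2 := by
  rw [Rf, map_sum]
  exact Finset.sum_congr rfl fun a _ => by simp

lemma eval_Zp (x y : Fin n → ℝ) (hy : ∑ a, y a ^ 2 = 1) :
    ∀ i, eval y (Zp x i) = geg n i (∑ a, x a * y a) := by
  have key : ∀ i, eval y (Zp x i) = geg n i (∑ a, x a * y a) ∧
      eval y (Zp x (i+1)) = geg n (i+1) (∑ a, x a * y a) := by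
    intro i
    induction i with
    | zero =>
        constructor
        · rw [show Zp x 0 = 1 from rfl, show geg n 0 = fun _ => 1 from rfl]; simp
        · rw [show Zp x 1 = Lf x from rfl, show geg n 1 = fun t => t from rfl, eval_Lf]
    | succ i ih =>
        obtain ⟨h0, h1⟩ := ih
        refine ⟨h1, ?_⟩
        rw [show Zp x (i+2) = (((i:ℝ)+1)+(n:ℝ)-2)⁻¹ •
            ((2*((i:ℝ)+1)+(n:ℝ)-2) • (Lf x * Zp x (i+1)) - ((i:ℝ)+1) • (Rf * Zp x i)) from rfl]
        rw [show geg n (i+2) (∑ a, x a * y a) =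
            ((2 * ((i : ℝ) + 1) + (n : ℝ) - 2) * (∑ a, x a * y a) * geg n (i + 1) (∑ a, x a * y a)
            - ((i : ℝ) + 1) * geg n i (∑ a, x a * y a)) / (((i : ℝ) + 1) + (n : ℝ) - 2) from rfl]
        rw [smul_eval, map_sub, smul_eval, smul_eval, map_mul, map_mul, eval_Lf, eval_Rf, hy,
            h0, h1]
        push_cast
        field_simp
  exact fun i => (key i).1

lemma coeff_Eop (α : Fin n →₀ ℕ) (q : MvPolynomial (Fin n) ℝ) :
    coeff α (Eop q) = (∑ a, (α a : ℝ)) * coeff α q := by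
  rw [Eop]
  rw [show coeff α (∑ a : Fin n, X a * pderiv a q) = ∑ a, coeff α (X a * pderiv a q) from by
    simp [MvPolynomial.coeff_sum], Finset.sum_mul]
  refine Finset.sum_congr rfl fun a _ => ?_
  rw [coeff_X_mul']
  by_cases h : a ∈ α.support
  · rw [if_pos h, coeff_pderiv]
    have ha : 1 ≤ α a := Nat.one_le_iff_ne_zero.mpr (Finsupp.mem_support_iff.mp h)
    have h1 : α - Finsupp.single a 1 + Finsupp.single a 1 = α := by
      rw [tsub_add_cancel_of_le]
      rwa [Finsupp.single_le_iff]
    have h2 : (((α - Finsupp.single a 1 : Fin n →₀ ℕ)) a : ℝ) + 1 = α a := by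
      rw [Finsupp.tsub_apply, Finsupp.single_apply, if_pos rfl]
      push_cast [Nat.cast_sub ha]
      ring
    rw [h1, h2]
  · rw [if_neg h]
    have : α a = 0 := Finsupp.notMem_support_iff.mp h
    rw [this]
    push_cast
    ring

lemma Eop_zero_const (q : MvPolynomial (Fin n) ℝ) (hq : Eop q = 0) :
    q = C (constantCoeff q) := by
  ext α
  rw [coeff_C]
  by_cases hα : α = 0
  · subst hα; simp [constantCoeff_eq]
  · rw [if_neg (fun h => hα h.symm)]
    have h1 : coeff α (Eop q) = 0 := by rw [hq]; simp
    rw [coeff_Eop] at h1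
    have h2 : (∑ a, (α a : ℝ)) ≠ 0 := by
      have : ∃ a, α a ≠ 0 := by
        by_contra hno
        push_neg at hno
        exact hα (Finsupp.ext fun a => hno a)
      obtain ⟨a, ha⟩ := this
      have hge : (1:ℝ) ≤ ∑ b, (α b : ℝ) := by
        calc (1:ℝ) ≤ (α a : ℝ) := by exact_mod_cast Nat.one_le_iff_ne_zero.mpr ha
        _ ≤ ∑ b, (α b : ℝ) := Finset.single_le_sum (f := fun b => (α b : ℝ))
            (fun b _ => Nat.cast_nonneg _) (Finset.mem_univ a)
      linarith
    exact (mul_eq_zero.mp h1).resolve_left h2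

lemma eval_Dop_Eop (x : Fin n → ℝ) (q : MvPolynomial (Fin n) ℝ) :
    eval x (Dop x q) = eval x (Eop q) := by
  rw [Dop, Eop, map_sum, map_sum]
  exact Finset.sum_congr rfl fun a _ => by rw [smul_eval, map_mul, eval_X]

lemma fisch_L_pow (x : Fin n → ℝ) :
    ∀ (j : ℕ) (q : MvPolynomial (Fin n) ℝ), Eop q = (j:ℝ) • q →
    fisch ((Lf x)^j) q = (j.factorial : ℝ) * eval x q := by
  intro j
  induction j with
  | zero =>
      intro q hq
      rw [Nat.cast_zero, zero_smul] at hq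
      rw [pow_zero, fisch_one_left, Eop_zero_const q hq]
      simp
  | succ j ih =>
      intro q hq
      push_cast at hq
      have hq' : Eop (Dop x q) = (j:ℝ) • Dop x q := by
        rw [Eop_Dop, hq, Dop_smul]
        module
      rw [pow_succ', fisch_Lf_adj, ih _ hq', eval_Dop_Eop, hq, smul_eval]
      rw [Nat.factorial_succ]
      push_cast
      ring

noncomputable def Dd (n : ℕ) : ℕ → ℝ
  | 0 => 1
  | 1 => 1
  | (j+2) => Dd n (j+1) * (2*((j:ℝ)+1)+(n:ℝ)-2)
noncomputable def Nn (n : ℕ) : ℕ → ℝ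
  | 0 => 1
  | 1 => 1
  | (j+2) => Nn n (j+1) * (((j:ℝ)+1)+(n:ℝ)-2)

lemma Dd_pos (hn : 2 ≤ n) : ∀ j, 0 < Dd n j := by
  have hn' : (2:ℝ) ≤ (n:ℝ) := by exact_mod_cast hn
  intro j
  induction j with
  | zero => norm_num [Dd]
  | succ k ih =>
      cases k with
      | zero => norm_num [Dd]
      | succ l =>
          rw [show Dd n (l+2) = Dd n (l+1) * (2*((l:ℝ)+1)+(n:ℝ)-2) from rfl]
          have h0 : (0:ℝ) ≤ (l:ℝ) := Nat.cast_nonneg l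
          have : 0 < 2*((l:ℝ)+1)+(n:ℝ)-2 := by nlinarith
          exact mul_pos ih this

lemma Nn_pos (hn : 2 ≤ n) : ∀ j, 0 < Nn n j := by
  have hn' : (2:ℝ) ≤ (n:ℝ) := by exact_mod_cast hn
  intro j
  induction j with
  | zero => norm_num [Nn]
  | succ k ih =>
      cases k with
      | zero => norm_num [Nn]
      | succ l =>
          rw [show Nn n (l+2) = Nn n (l+1) * (((l:ℝ)+1)+(n:ℝ)-2) from rfl]
          have h0 : (0:ℝ) ≤ (l:ℝ) := Nat.cast_nonneg l
          have : 0 < ((l:ℝ)+1)+(n:ℝ)-2 := by nlinarith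
          exact mul_pos ih this

lemma decomp (hn : 2 ≤ n) (x : Fin n → ℝ) :
    ∀ j, ∃ p : MvPolynomial (Fin n) ℝ,
      Dd n j • (Lf x)^j = Nn n j • Zp x j + Rf * p := by
  intro j
  induction j with
  | zero =>
      refine ⟨0, ?_⟩
      rw [show Dd n 0 = 1 from rfl, show Nn n 0 = 1 from rfl, show Zp x 0 = 1 from rfl]
      simp
  | succ j ih =>
      obtain ⟨p, hp⟩ := ih
      cases j with
      | zero =>
          refine ⟨0, ?_⟩
          rw [show Dd n 1 = 1 from rfl, show Nn n 1 = 1 from rfl, show Zp x 1 = Lf x from rfl]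
          simp
      | succ k =>
          refine ⟨(Nn n (k+1) * ((k:ℝ)+1)) • Zp x k
            + (2*((k:ℝ)+1)+(n:ℝ)-2) • (Lf x * p), ?_⟩
          have hm := mulL hn x (k+1)
          rw [Nat.add_sub_cancel] at hm
          push_cast at hm
          have hp' := congrArg (fun w => Lf x * w) hp
          simp only [mul_smul_comm, mul_add] at hp'
          rw [mul_left_comm] at hp'
          rw [show Dd n (k+2) = Dd n (k+1) * (2*((k:ℝ)+1)+(n:ℝ)-2) from rfl,
              show Nn n (k+2) = Nn n (k+1) * (((k:ℝ)+1)+(n:ℝ)-2) from rfl,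
              show (Lf x)^(k+2) = Lf x * (Lf x)^(k+1) from pow_succ' _ _]
          have hdist : Rf * ((Nn n (k+1) * ((k:ℝ)+1)) • Zp x k
                + (2*((k:ℝ)+1)+(n:ℝ)-2) • (Lf x * p))
              = (Nn n (k+1) * ((k:ℝ)+1)) • (Rf * Zp x k)
                + (2*((k:ℝ)+1)+(n:ℝ)-2) • (Rf * (Lf x * p)) := by
            rw [smul_eq_C_mul, smul_eq_C_mul, smul_eq_C_mul, smul_eq_C_mul]
            ring
          rw [hdist]
          linear_combination (norm := module)
            (2*((k:ℝ)+1)+(n:ℝ)-2) • hp' + (Nn n (k+1)) • hm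

lemma unit_sum_sq {x : EuclideanSpace ℝ (Fin n)} (hx : ‖x‖ = 1) :
    ∑ a, x a ^ 2 = 1 := by
  have h : ⟪x, x⟫ = 1 := by rw [real_inner_self_eq_norm_sq, hx]; norm_num
  rw [← h, PiLp.inner_apply]
  refine Finset.sum_congr rfl fun a _ => ?_
  simp [RCLike.inner_apply, pow_two]

lemma inner_eq_sum (x y : EuclideanSpace ℝ (Fin n)) : ⟪x, y⟫ = ∑ a, x a * y a := by
  rw [PiLp.inner_apply]
  exact Finset.sum_congr rfl fun a _ => by simp [RCLike.inner_apply, mul_comm]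

theorem geg_pd (hn : 2 ≤ n) (j : ℕ) (Cs : Finset (EuclideanSpace ℝ (Fin n)))
    (hsph : ∀ x ∈ Cs, ‖x‖ = 1) :
    0 ≤ ∑ x ∈ Cs, ∑ y ∈ Cs, geg n j ⟪x, y⟫ := by
  classical
  set q : MvPolynomial (Fin n) ℝ := ∑ x ∈ Cs, Zp x j with hq
  have hEq : Eop q = (j:ℝ) • q := by
    rw [hq, Eop_sum, Finset.smul_sum]
    exact Finset.sum_congr rfl fun x hx =>
      (Zp_props hn x (unit_sum_sq (hsph x hx)) j).2.1
  have hlapq : lap q = 0 := by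
    rw [hq, lap_sum]
    refine Finset.sum_eq_zero fun x hx => (Zp_props hn x (unit_sum_sq (hsph x hx)) j).1
  have key : ∀ x ∈ Cs, fisch (Zp x j) q
      = (Dd n j * (j.factorial : ℝ) / Nn n j) * eval x q := by
    intro x hx
    obtain ⟨p, hp⟩ := decomp hn x j
    have h2 := congrArg (fun w => fisch w q) hp
    simp only [] at h2
    rw [fisch_smul_left, fisch_add_left, fisch_smul_left, fisch_Rf_adj, hlapq] at h2
    have hz : fisch p (0 : MvPolynomial (Fin n) ℝ) = 0 := by
      rw [fisch_comm]; exact fisch_zero_left p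
    rw [hz, add_zero, fisch_L_pow x j q hEq] at h2
    have hNn := Nn_pos hn j
    field_simp
    linarith [h2]
  have hsum : fisch q q = (Dd n j * (j.factorial : ℝ) / Nn n j) * ∑ x ∈ Cs, eval x q := by
    rw [hq, fisch_sum_left, Finset.mul_sum]
    exact Finset.sum_congr rfl fun x hx => key x hx
  have hpos : 0 < Dd n j * (j.factorial : ℝ) / Nn n j := by
    have := Dd_pos hn j
    have := Nn_pos hn j
    have : (0:ℝ) < (j.factorial : ℝ) := by exact_mod_cast j.factorial_pos
    positivity
  have hge : 0 ≤ ∑ x ∈ Cs, eval x q := by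
    by_contra hneg
    push_neg at hneg
    have := fisch_nonneg (n := n) q
    nlinarith
  have heval : ∑ x ∈ Cs, eval x q = ∑ x ∈ Cs, ∑ y ∈ Cs, geg n j ⟪x, y⟫ := by
    rw [Finset.sum_comm (s := Cs) (t := Cs) (f := fun x y => geg n j ⟪x, y⟫)]
    refine Finset.sum_congr rfl fun x hx => ?_
    rw [hq, map_sum]
    refine Finset.sum_congr rfl fun y hy => ?_
    rw [eval_Zp y x (unit_sum_sq (hsph x hx)) j, inner_eq_sum]
  rwa [heval] at hge


end Helpers


lemma geg_one {n : ℕ} (hn : 2 ≤ n) : ∀ i, geg n i 1 = 1 := by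
  have key : ∀ i, geg n i 1 = 1 ∧ geg n (i+1) 1 = 1 := by
    intro i
    induction i with
    | zero => exact ⟨rfl, rfl⟩
    | succ i ih =>
        obtain ⟨h0, h1⟩ := ih
        refine ⟨h1, ?_⟩
        show ((2 * ((i : ℝ) + 1) + (n : ℝ) - 2) * 1 * geg n (i + 1) 1
          - ((i : ℝ) + 1) * geg n i 1) / (((i : ℝ) + 1) + (n : ℝ) - 2) = 1
        rw [h0, h1]
        have hc : (((i:ℝ)+1)+(n:ℝ)-2) ≠ 0 := by
          have : (2:ℝ) ≤ (n:ℝ) := by exact_mod_cast hn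
          have h0' : (0:ℝ) ≤ (i:ℝ) := Nat.cast_nonneg i
          nlinarith
        field_simp
        ring
  exact fun i => (key i).1

theorem LP_bound_spherical_codes (n : ℕ) (hn : 2 ≤ n) (s : ℝ)
    (hs : s ∈ Set.Ico (-1 : ℝ) 1)
    (f : ℝ → ℝ) (m : ℕ) (c : ℕ → ℝ)
    (hf : ∀ t : ℝ, f t = ∑ i ∈ Finset.range (m + 1), c i * geg n i t)
    (hA1 : ∀ t ∈ Set.Icc (-1 : ℝ) s, f t ≤ 0)
    (hA2a : 0 < c 0) (hA2b : ∀ i : ℕ, 1 ≤ i → i ≤ m → 0 ≤ c i)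
    (C : Finset (EuclideanSpace ℝ (Fin n)))
    (hsph : ∀ x ∈ C, ‖x‖ = 1)
    (hinner : ∀ x ∈ C, ∀ y ∈ C, x ≠ y → ⟪x, y⟫ ≤ s) :
    (C.card : ℝ) ≤ f 1 / c 0 := by
  classical
  have hf1 : c 0 ≤ f 1 := by
    rw [hf 1]
    rw [Finset.sum_range_succ']
    have h1 : ∀ i ∈ Finset.range m, 0 ≤ c (i+1) * geg n (i+1) 1 := by
      intro i hi
      rw [geg_one hn]
      rw [mul_one]
      exact hA2b (i+1) (by omega) (by simpa using Finset.mem_range.mp hi)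
    have h2 : c 0 * geg n 0 1 = c 0 := by rw [geg_one hn, mul_one]
    rw [h2]
    have := Finset.sum_nonneg h1
    linarith
  rcases Nat.eq_zero_or_pos C.card with hN | hN
  · rw [hN]
    push_cast
    exact div_nonneg (le_trans hA2a.le hf1) hA2a.le
  -- diagonal entries
  have hdiag : ∀ x ∈ C, ⟪x, x⟫ = (1:ℝ) := by
    intro x hx
    rw [real_inner_self_eq_norm_sq, hsph x hx]
    norm_num
  -- lower bound on the double sum
  have hlow : c 0 * (C.card : ℝ)^2 ≤ ∑ x ∈ C, ∑ y ∈ C, f ⟪x, y⟫ := by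
    have hswap : ∑ x ∈ C, ∑ y ∈ C, f ⟪x, y⟫
        = ∑ i ∈ Finset.range (m+1), c i * (∑ x ∈ C, ∑ y ∈ C, geg n i ⟪x, y⟫) := by
      calc ∑ x ∈ C, ∑ y ∈ C, f ⟪x, y⟫
          = ∑ x ∈ C, ∑ i ∈ Finset.range (m+1), ∑ y ∈ C, c i * geg n i ⟪x, y⟫ := by
            refine Finset.sum_congr rfl fun x hx => ?_
            rw [Finset.sum_comm]
            exact Finset.sum_congr rfl fun y hy => hf _
        _ = ∑ i ∈ Finset.range (m+1), ∑ x ∈ C, ∑ y ∈ C, c i * geg n i ⟪x, y⟫ :=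
            Finset.sum_comm
        _ = ∑ i ∈ Finset.range (m+1), c i * (∑ x ∈ C, ∑ y ∈ C, geg n i ⟪x, y⟫) := by
            refine Finset.sum_congr rfl fun i _ => ?_
            rw [Finset.mul_sum]
            exact Finset.sum_congr rfl fun x _ => by rw [Finset.mul_sum]
    rw [hswap, Finset.sum_range_succ']
    have hzero : c 0 * (∑ x ∈ C, ∑ y ∈ C, geg n 0 ⟪x, y⟫) = c 0 * (C.card : ℝ)^2 := by
      have : ∀ x ∈ C, ∑ y ∈ C, geg n 0 ⟪x, y⟫ = (C.card : ℝ) := by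
        intro x _
        calc ∑ y ∈ C, geg n 0 ⟪x, y⟫ = ∑ _y ∈ C, (1:ℝ) :=
              Finset.sum_congr rfl fun y _ => rfl
          _ = (C.card : ℝ) := by rw [Finset.sum_const, nsmul_eq_mul, mul_one]
      rw [Finset.sum_congr rfl this, Finset.sum_const, nsmul_eq_mul]
      ring
    rw [hzero]
    have hpos : ∀ i ∈ Finset.range m, 0 ≤ c (i+1) * (∑ x ∈ C, ∑ y ∈ C, geg n (i+1) ⟪x, y⟫) := by
      intro i hi
      exact mul_nonneg (hA2b (i+1) (by omega) (by simpa using Finset.mem_range.mp hi))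
        (geg_pd hn (i+1) C hsph)
    have := Finset.sum_nonneg hpos
    linarith
  -- upper bound on the double sum
  have hup : ∑ x ∈ C, ∑ y ∈ C, f ⟪x, y⟫ ≤ (C.card : ℝ) * f 1 := by
    have hx1 : ∀ x ∈ C, ∑ y ∈ C, f ⟪x, y⟫ ≤ f 1 := by
      intro x hx
      rw [← Finset.add_sum_erase C _ hx]
      have hneg : ∀ y ∈ C.erase x, f ⟪x, y⟫ ≤ 0 := by
        intro y hy
        obtain ⟨hyx, hyC⟩ := Finset.mem_erase.mp hy
        refine hA1 _ ⟨?_, hinner x hx y hyC (fun h => hyx h.symm)⟩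
        have habs := abs_real_inner_le_norm x y
        rw [hsph x hx, hsph y hyC, mul_one] at habs
        have := abs_le.mp habs
        linarith [this.1]
      have hsum := Finset.sum_nonpos hneg
      rw [hdiag x hx]
      linarith
    calc ∑ x ∈ C, ∑ y ∈ C, f ⟪x, y⟫ ≤ ∑ _x ∈ C, f 1 := Finset.sum_le_sum hx1
      _ = (C.card : ℝ) * f 1 := by rw [Finset.sum_const, nsmul_eq_mul]
  -- combine
  have hcard : (0:ℝ) < (C.card : ℝ) := by exact_mod_cast hN
  rw [le_div_iff₀ hA2a]
  have h3 : c 0 * (C.card : ℝ)^2 ≤ (C.card : ℝ) * f 1 := le_trans hlow hup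
  nlinarith
end

section
/- LP bound for spherical code energy: let n ≥ 2, M ≥ 2, h : [-1,1] → [0,∞], and f a real polynomial with f(t) ≤ h(t) for all t ∈ [-1,1] and Gegenbauer expansion f = Σ f_i P_i^{(n)} with f_0 > 0 and f_i ≥ 0 for all i ≥ 1. Then every M-point set C ⊂ S^{n-1} has h-energy E_h(C) = Σ_{x≠y∈C} h(⟨x,y⟩) ≥ M(f_0 M - f(1)). -/
open Finset

namespace LPaux

section PolyPart
open Polynomial

noncomputable def gegP (n : ℕ) : ℕ → Polynomial ℝ
  | 0 => 1
  | 1 => X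
  | (i + 2) => C ((((i:ℝ) + 1) + (n:ℝ) - 2)⁻¹) *
      (C (2 * ((i:ℝ) + 1) + (n:ℝ) - 2) * X * gegP n (i + 1) - C ((i:ℝ) + 1) * gegP n i)

lemma geg_eval (n : ℕ) : ∀ (i : ℕ) (t : ℝ), geg n i t = (gegP n i).eval t
  | 0, t => by simp [geg, gegP]
  | 1, t => by simp [geg, gegP]
  | (i + 2), t => by
      simp only [geg, gegP, geg_eval n (i+1), geg_eval n i, eval_mul, eval_sub, eval_C, eval_X]
      rw [div_eq_inv_mul]

variable {n : ℕ}

lemma den_pos (hn : 2 ≤ n) (i : ℕ) : (0:ℝ) < (i:ℝ) + (n:ℝ) - 1 := by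
  have : (2:ℝ) ≤ (n:ℝ) := by exact_mod_cast hn
  have : (0:ℝ) ≤ (i:ℝ) := Nat.cast_nonneg i
  linarith

lemma gegP_rec (hn : 2 ≤ n) (i : ℕ) :
    C ((i:ℝ) + (n:ℝ) - 1) * gegP n (i + 2)
      = C (2 * (i:ℝ) + (n:ℝ)) * X * gegP n (i + 1) - C ((i:ℝ) + 1) * gegP n i := by
  have hd : ((i:ℝ) + (n:ℝ) - 1) ≠ 0 := ne_of_gt (den_pos hn i)
  show C ((i:ℝ) + (n:ℝ) - 1) * gegP n (i + 2) = _
  rw [show gegP n (i+2) = C ((((i:ℝ) + 1) + (n:ℝ) - 2)⁻¹) *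
      (C (2 * ((i:ℝ) + 1) + (n:ℝ) - 2) * X * gegP n (i + 1) - C ((i:ℝ) + 1) * gegP n i) from rfl]
  rw [← mul_assoc, ← C_mul]
  rw [show ((i:ℝ) + (n:ℝ) - 1) * (((i:ℝ) + 1) + (n:ℝ) - 2)⁻¹ = 1 by
    rw [show ((i:ℝ) + 1) + (n:ℝ) - 2 = (i:ℝ) + (n:ℝ) - 1 by ring]; field_simp]
  rw [show (2 * ((i:ℝ) + 1) + (n:ℝ) - 2) = 2*(i:ℝ) + (n:ℝ) by ring]
  rw [C_1, one_mul]

/-- J-identity: `(1-X²) gegP_k' = (k+n-2)(X gegP_k - gegP_{k+1})`. -/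
lemma gegP_deriv (hn : 2 ≤ n) : ∀ k : ℕ, (1 - X^2) * derivative (gegP n k)
    = C ((k:ℝ) + (n:ℝ) - 2) * (X * gegP n k - gegP n (k + 1))
  | 0 => by
      simp [gegP]
  | 1 => by
      have hd : (-1 + (n:ℝ)) ≠ 0 := by
        have h2 : (2:ℝ) ≤ (n:ℝ) := by exact_mod_cast hn
        linarith
      apply Polynomial.funext
      intro t
      simp only [gegP, derivative_X, eval_mul, eval_sub, eval_add, eval_C, eval_X,
        eval_one, eval_pow]
      linear_combination (t^2*(n:ℝ) - 1) * mul_inv_cancel₀ hd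
  | (k + 2) => by
      have e1 := gegP_deriv hn (k + 1)
      have e0 := gegP_deriv hn k
      have R0 := gegP_rec hn k
      have R1 := gegP_rec hn (k + 1)
      have Rd := congrArg derivative R0
      simp only [derivative_mul, derivative_C, derivative_X, zero_mul, zero_add, mul_one,
        derivative_sub] at Rd
      apply Polynomial.funext
      intro t
      have hd : ((k:ℝ) + (n:ℝ) - 1) ≠ 0 := ne_of_gt (den_pos hn k)
      have e1t := congrArg (eval t) e1
      have e0t := congrArg (eval t) e0
      have r0 := congrArg (eval t) R0
      have r1 := congrArg (eval t) R1
      have rd := congrArg (eval t) Rd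
      simp only [eval_mul, eval_sub, eval_add, eval_C, eval_X, eval_one, eval_pow,
        Nat.cast_add, Nat.cast_one, Nat.cast_ofNat] at e1t e0t r0 r1 rd ⊢
      have key : ((k:ℝ) + (n:ℝ) - 1) * ((1 - t^2) * eval t (derivative (gegP n (k+2))))
          = ((k:ℝ) + (n:ℝ) - 1) * ((((k:ℝ) + (n:ℝ))) *
              (t * eval t (gegP n (k+2)) - eval t (gegP n (k+3)))) := by
        linear_combination (1-t^2) * rd + ((2*(k:ℝ)+(n:ℝ))*t) * e1t - ((k:ℝ)+1) * e0t
          - (((k:ℝ)+(n:ℝ)-2)*t) * r0 + ((k:ℝ)+(n:ℝ)-1) * r1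
      have main := mul_left_cancel₀ hd key
      linear_combination main


end PolyPart

section MV


open MvPolynomial

variable {σ : Type*} [Fintype σ] [DecidableEq σ]

lemma weight_single_one (w : σ → ℕ) (j : σ) :
    (Finsupp.weight w) (Finsupp.single j 1) = w j := by
  simp [Finsupp.weight_apply, Finsupp.sum_single_index]

lemma pderiv_whom {w : σ → ℕ} {p : MvPolynomial σ ℝ} {m : ℕ}
    (hp : p.IsWeightedHomogeneous w m) (j : σ) :
    (pderiv j p).IsWeightedHomogeneous w (m - w j) := by
  nth_rewrite 1 [p.as_sum]
  rw [map_sum]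
  apply IsWeightedHomogeneous.sum
  intro d hd
  rw [pderiv_monomial]
  by_cases hdj : d j = 0
  · rw [hdj]; simp only [Nat.cast_zero, mul_zero]
    rw [show (monomial (d - Finsupp.single j 1)) (0:ℝ) = 0 from (monomial _).map_zero]
    exact isWeightedHomogeneous_zero _ _ _
  · apply isWeightedHomogeneous_monomial
    have hle : Finsupp.single j 1 ≤ d := by
      rw [Finsupp.single_le_iff]; omega
    have hsum : d - Finsupp.single j 1 + Finsupp.single j 1 = d := tsub_add_cancel_of_le hle
    have hw : (Finsupp.weight w) (d - Finsupp.single j 1) + w j = m := by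
      have := congrArg (Finsupp.weight w) hsum
      rw [map_add, weight_single_one] at this
      rw [this]
      exact hp (mem_support_iff.mp hd)
    omega

lemma pderiv_eq_zero_of_lt {w : σ → ℕ} {p : MvPolynomial σ ℝ} {m : ℕ}
    (hp : p.IsWeightedHomogeneous w m) (j : σ) (hm : m < w j) :
    pderiv j p = 0 := by
  nth_rewrite 1 [p.as_sum]
  rw [map_sum]
  apply Finset.sum_eq_zero
  intro d hd
  rw [pderiv_monomial]
  have hdj : d j = 0 := by
    by_contra hne
    have hle : Finsupp.single j 1 ≤ d := by rw [Finsupp.single_le_iff]; omega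
    have hsum : d - Finsupp.single j 1 + Finsupp.single j 1 = d := tsub_add_cancel_of_le hle
    have hww := hp (mem_support_iff.mp hd)
    have := congrArg (Finsupp.weight w) hsum
    rw [map_add, weight_single_one] at this
    omega
  rw [hdj]
  simp

/-- Weighted Euler identity. -/
lemma euler_weighted {w : σ → ℕ} {p : MvPolynomial σ ℝ} {m : ℕ}
    (hp : p.IsWeightedHomogeneous w m) :
    ∑ j, C ((w j : ℝ)) * (X j * pderiv j p) = C ((m : ℝ)) * p := by
  conv_rhs => rw [p.as_sum]
  rw [Finset.mul_sum]
  have : ∀ j, C ((w j : ℝ)) * (X j * pderiv j p)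
      = ∑ d ∈ p.support, C ((w j : ℝ)) * (X j * pderiv j (monomial d (coeff d p))) := by
    intro j
    rw [← Finset.mul_sum, ← Finset.mul_sum, ← map_sum, ← p.as_sum]
  simp_rw [this]
  rw [Finset.sum_comm]
  apply Finset.sum_congr rfl
  intro d hd
  have hwd : (Finsupp.weight w) d = m := hp (mem_support_iff.mp hd)
  -- per-monomial
  have step : ∀ j, C ((w j : ℝ)) * (X j * pderiv j (monomial d (coeff d p)))
      = monomial d (((w j * d j : ℕ) : ℝ) * coeff d p) := by
    intro j
    rw [pderiv_monomial]
    by_cases hdj : d j = 0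
    · rw [hdj]; simp
    · have hle : Finsupp.single j 1 ≤ d := by rw [Finsupp.single_le_iff]; omega
      rw [X, monomial_mul]
      rw [show Finsupp.single j 1 + (d - Finsupp.single j 1) = d from by
        rw [add_comm]; exact tsub_add_cancel_of_le hle]
      rw [C_mul_monomial]
      push_cast
      congr 1
      ring
  simp_rw [step]
  rw [← map_sum (monomial d)]
  rw [C_mul_monomial]
  congr 1
  rw [← Finset.sum_mul, ← Nat.cast_sum]
  rw [show ∑ j, w j * d j = m by
    rw [← hwd, Finsupp.weight_apply, Finsupp.sum_fintype]
    · exact Finset.sum_congr rfl fun j _ => by simp [mul_comm, smul_eq_mul]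
    · intro j; simp]


lemma whom_sub {w : σ → ℕ} {a b : MvPolynomial σ ℝ} {m : ℕ}
    (ha : a.IsWeightedHomogeneous w m) (hb : b.IsWeightedHomogeneous w m) :
    (a - b).IsWeightedHomogeneous w m := by
  rw [← mem_weightedHomogeneousSubmodule] at *
  exact Submodule.sub_mem _ ha hb

lemma pderiv_comm (i j : σ) (p : MvPolynomial σ ℝ) :
    pderiv i (pderiv j p) = pderiv j (pderiv i p) := by
  by_cases hij : i = j
  · rw [hij]
  · conv_lhs => rw [p.as_sum]
    conv_rhs => rw [p.as_sum]
    rw [map_sum, map_sum, map_sum, map_sum]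
    apply Finset.sum_congr rfl
    intro d _
    rw [pderiv_monomial, pderiv_monomial, pderiv_monomial, pderiv_monomial]
    have h1 : ((d - Finsupp.single j 1 : σ →₀ ℕ)) i = d i := by
      rw [Finsupp.tsub_apply, Finsupp.single_apply, if_neg (Ne.symm hij)]; omega
    have h2 : ((d - Finsupp.single i 1 : σ →₀ ℕ)) j = d j := by
      rw [Finsupp.tsub_apply, Finsupp.single_apply, if_neg hij]; omega
    rw [h1, h2, tsub_right_comm]
    congr 1
    ring

section QU

variable (n : ℕ)

noncomputable def QU (n : ℕ) : ℕ → MvPolynomial (Fin 2) ℝ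
  | 0 => 1
  | (i + 1) => X 0 * QU n i
      - C ((2 * (i:ℝ) + (n:ℝ) - 2)⁻¹) *
        (X 1 * (pderiv 0 (QU n i) + 2 * X 0 * pderiv 1 (QU n i)))

lemma QU_one : QU n 1 = X 0 := by
  show X 0 * QU n 0 - _ = _
  rw [show QU n 0 = 1 from rfl]
  simp

/-- weights for the two variables `U`, `S`. -/
def wt : Fin 2 → ℕ := ![1, 2]

lemma QU_whom : ∀ i : ℕ, (QU n i).IsWeightedHomogeneous wt i
  | 0 => isWeightedHomogeneous_one ℝ wt
  | 1 => by rw [QU_one]; simpa [wt] using isWeightedHomogeneous_X ℝ wt (0 : Fin 2)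
  | (i + 2) => by
    have IH := QU_whom (i + 1)
    show ((X 0 * QU n (i+1)) - _).IsWeightedHomogeneous wt (i+2)
    apply whom_sub
    · rw [show i + 2 = 1 + (i+1) from by omega]
      have := (isWeightedHomogeneous_X ℝ wt (0 : Fin 2)).mul IH
      simpa [wt] using this
    · rw [show ((i+2 : ℕ)) = 0 + (2 + (i + 1 - 1)) from by omega]
      apply (isWeightedHomogeneous_C wt _).mul
      apply (isWeightedHomogeneous_X ℝ wt (1 : Fin 2)).mul
      apply IsWeightedHomogeneous.add
      · simpa [wt] using pderiv_whom IH (0 : Fin 2)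
      · by_cases hi : i = 0
        · subst hi
          rw [QU_one]
          rw [show pderiv (1 : Fin 2) (X 0 : MvPolynomial (Fin 2) ℝ) = 0 from by
            rw [pderiv_X]; simp [Pi.single_apply]]
          rw [mul_zero]
          exact isWeightedHomogeneous_zero ℝ wt _
        · have h2 : (C (2:ℝ) : MvPolynomial (Fin 2) ℝ) = 2 := map_ofNat _ 2
          rw [← h2, mul_assoc]
          rw [show (i + 1 - 1 : ℕ) = 0 + (1 + (i + 1 - 2)) from by omega]
          apply (isWeightedHomogeneous_C wt _).mul
          apply (isWeightedHomogeneous_X ℝ wt (0 : Fin 2)).mul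
          simpa [wt] using pderiv_whom IH (1 : Fin 2)

end QU

section Zonal

variable {n : ℕ}

noncomputable def LL (x : Fin n → ℝ) : MvPolynomial (Fin n) ℝ := ∑ j, C (x j) * X j
noncomputable def RR (n : ℕ) : MvPolynomial (Fin n) ℝ := ∑ j, X j ^ 2
noncomputable def DD (x : Fin n → ℝ) (p : MvPolynomial (Fin n) ℝ) : MvPolynomial (Fin n) ℝ :=
  ∑ j, C (x j) * pderiv j p
noncomputable def lap (p : MvPolynomial (Fin n) ℝ) : MvPolynomial (Fin n) ℝ :=
  ∑ j, pderiv j (pderiv j p)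

lemma DD_add (x : Fin n → ℝ) (p q : MvPolynomial (Fin n) ℝ) :
    DD x (p + q) = DD x p + DD x q := by
  simp [DD, mul_add, Finset.sum_add_distrib]

lemma DD_mul (x : Fin n → ℝ) (p q : MvPolynomial (Fin n) ℝ) :
    DD x (p * q) = DD x p * q + p * DD x q := by
  simp only [DD, pderiv_mul, mul_add]
  rw [Finset.sum_add_distrib, Finset.sum_mul, Finset.mul_sum]
  congr 1
  · apply Finset.sum_congr rfl; intro j _; ring
  · apply Finset.sum_congr rfl; intro j _; ring

lemma DD_C (x : Fin n → ℝ) (a : ℝ) : DD x (C a) = 0 := by simp [DD]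

lemma DD_one (x : Fin n → ℝ) : DD x (1 : MvPolynomial (Fin n) ℝ) = 0 := by simp [DD]

lemma DD_X (x : Fin n → ℝ) (k : Fin n) : DD x (X k) = C (x k) := by
  rw [DD, Finset.sum_eq_single k]
  · rw [pderiv_X_self, mul_one]
  · intro j _ hj; rw [pderiv_X_of_ne (Ne.symm hj), mul_zero]
  · intro hk; exact absurd (Finset.mem_univ k) hk

lemma DD_sum (x : Fin n → ℝ) {ι : Type*} (s : Finset ι) (f : ι → MvPolynomial (Fin n) ℝ) :
    DD x (∑ j ∈ s, f j) = ∑ j ∈ s, DD x (f j) := by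
  simp only [DD, map_sum, Finset.mul_sum]
  rw [Finset.sum_comm]

lemma DD_LL (x : Fin n → ℝ) (hx : ∑ j, x j ^ 2 = 1) : DD x (LL x) = 1 := by
  rw [LL, DD_sum]
  have : ∀ j, DD x (C (x j) * X j) = C (x j * x j) := by
    intro j
    rw [DD_mul, DD_C, DD_X, zero_mul, zero_add, ← C_mul]
  simp_rw [this]
  rw [← map_sum]
  rw [show ∑ j, x j * x j = 1 from by rw [← hx]; exact Finset.sum_congr rfl fun j _ => (sq (x j)).symm]
  exact C_1

lemma DD_RR (x : Fin n → ℝ) : DD x (RR n) = 2 * LL x := by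
  rw [RR, DD_sum]
  have : ∀ j : Fin n, DD x ((X j : MvPolynomial (Fin n) ℝ)^2) = 2 * (C (x j) * X j) := by
    intro j
    rw [sq, DD_mul, DD_X]
    ring
  simp_rw [this]
  rw [← Finset.mul_sum, LL]

lemma DD_aeval (x : Fin n → ℝ) (v : Fin 2 → MvPolynomial (Fin n) ℝ)
    (P : MvPolynomial (Fin 2) ℝ) :
    DD x (aeval v P) =
      aeval v (pderiv 0 P) * DD x (v 0) + aeval v (pderiv 1 P) * DD x (v 1) := by
  induction P using MvPolynomial.induction_on with
  | C a => simp [DD_C, aeval_C, algebraMap_eq]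
  | add p q hp hq =>
      rw [map_add, DD_add, hp, hq]
      simp only [map_add]
      ring
  | mul_X p k hp =>
      rw [map_mul, aeval_X, DD_mul, hp]
      rw [pderiv_mul, pderiv_mul]
      fin_cases k <;>
        simp only [Fin.mk_zero, Fin.mk_one, pderiv_X_self, pderiv_X_of_ne (show (0:Fin 2) ≠ 1 from by decide),
          pderiv_X_of_ne (show (1:Fin 2) ≠ 0 from by decide), map_add, map_mul, aeval_X,
          mul_one, mul_zero, zero_add, add_zero, map_zero] <;>
        ring


noncomputable def ZZ (n : ℕ) (x : Fin n → ℝ) (i : ℕ) : MvPolynomial (Fin n) ℝ :=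
  aeval ![LL x, RR n] (QU n i)

lemma ZZ_zero (x : Fin n → ℝ) : ZZ n x 0 = 1 := by
  rw [ZZ, show QU n 0 = 1 from rfl, map_one]

lemma DD_ZZ (x : Fin n → ℝ) (hx : ∑ j, x j ^ 2 = 1) (i : ℕ) :
    DD x (ZZ n x i) =
      aeval ![LL x, RR n] (pderiv 0 (QU n i) + 2 * X 0 * pderiv 1 (QU n i)) := by
  rw [ZZ, DD_aeval]
  simp only [Matrix.cons_val_zero, Matrix.cons_val_one, Matrix.head_cons]
  rw [DD_LL x hx, DD_RR, map_add, map_mul, map_mul, aeval_X, Matrix.cons_val_zero]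
  rw [show (aeval ![LL x, RR n]) (2 : MvPolynomial (Fin 2) ℝ) = 2 from map_ofNat _ 2]
  ring

lemma ZZ_succ (x : Fin n → ℝ) (hx : ∑ j, x j ^ 2 = 1) (i : ℕ) :
    ZZ n x (i + 1) = LL x * ZZ n x i
      - C ((2 * (i:ℝ) + (n:ℝ) - 2)⁻¹) * (RR n * DD x (ZZ n x i)) := by
  rw [ZZ]
  rw [show QU n (i+1) = X 0 * QU n i
      - MvPolynomial.C ((2 * (i:ℝ) + (n:ℝ) - 2)⁻¹) *
        (X 1 * (pderiv 0 (QU n i) + 2 * X 0 * pderiv 1 (QU n i))) from rfl]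
  rw [map_sub, map_mul, map_mul, aeval_X, aeval_C, Matrix.cons_val_zero]
  rw [DD_ZZ x hx i, ZZ]
  rw [map_mul, aeval_X, Matrix.cons_val_one, Matrix.cons_val_zero]
  rw [algebraMap_eq]

lemma LL_hom (x : Fin n → ℝ) : (LL x).IsHomogeneous 1 := by
  rw [LL]
  apply IsHomogeneous.sum
  intro j _
  simpa using (isHomogeneous_C _ (x j)).mul (isHomogeneous_X ℝ j)

lemma RR_hom : (RR n).IsHomogeneous 2 := by
  rw [RR]
  apply IsHomogeneous.sum
  intro j _
  simpa using (isHomogeneous_X ℝ j).pow 2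

lemma ZZ_hom (x : Fin n → ℝ) (i : ℕ) : (ZZ n x i).IsHomogeneous i := by
  rw [ZZ]
  have hQ := QU_whom n i
  rw [(QU n i).as_sum, map_sum]
  apply IsHomogeneous.sum
  intro e he
  rw [aeval_monomial]
  have hprod : (e.prod fun k m => (![LL x, RR n] : Fin 2 → MvPolynomial (Fin n) ℝ) k ^ m)
      = LL x ^ (e 0) * RR n ^ (e 1) := by
    rw [Finsupp.prod_fintype]
    · rw [Fin.prod_univ_two]
      simp
    · intro k; exact pow_zero _
  rw [hprod]
  have hw : e 0 * 1 + e 1 * 2 = i := by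
    have := hQ (mem_support_iff.mp he)
    rw [Finsupp.weight_apply, Finsupp.sum_fintype] at this
    · rw [← this, Fin.sum_univ_two]
      simp [wt, mul_comm]
    · intro k; simp
  have : (algebraMap ℝ (MvPolynomial (Fin n) ℝ)) (coeff e (QU n i)) = C (coeff e (QU n i)) :=
    algebraMap_eq ℝ (Fin n) ▸ rfl
  rw [this]
  have h1 := ((LL_hom x).pow (e 0)).mul (RR_hom.pow (e 1))
  have h2 := (isHomogeneous_C (Fin n) (coeff e (QU n i))).mul h1
  rw [show (1 * (e 0) : ℕ) = e 0 from one_mul _, show (2 * (e 1) : ℕ) = e 1 * 2 from by ring] at h2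
  rw [show (0 + (e 0 + e 1 * 2) : ℕ) = i from by omega] at h2
  exact h2

lemma DD_hom (x : Fin n → ℝ) {p : MvPolynomial (Fin n) ℝ} {m : ℕ} (hp : p.IsHomogeneous m) :
    (DD x p).IsHomogeneous (m - 1) := by
  rw [DD]
  apply IsHomogeneous.sum
  intro j _
  have hd : (pderiv j p).IsHomogeneous (m - 1) := by
    have := pderiv_whom (w := (1 : Fin n → ℕ)) hp j
    simp at this; exact this
  simpa using (isHomogeneous_C _ (x j)).mul hd

lemma pderiv_LL (x : Fin n → ℝ) (j : Fin n) : pderiv j (LL x) = C (x j) := by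
  rw [LL, map_sum, Finset.sum_eq_single j]
  · rw [pderiv_C_mul, pderiv_X_self, mul_one]
  · intro k _ hk; rw [pderiv_C_mul, pderiv_X_of_ne hk, mul_zero]
  · intro hk; exact absurd (Finset.mem_univ j) hk

lemma pderiv_RR (j : Fin n) : pderiv j (RR n) = C 2 * X j := by
  rw [RR, map_sum, Finset.sum_eq_single j]
  · rw [pow_two, pderiv_mul, pderiv_X_self,
      show (C 2 : MvPolynomial (Fin n) ℝ) = 2 from map_ofNat _ 2]
    ring
  · intro k _ hk; rw [pow_two, pderiv_mul, pderiv_X_of_ne hk]; ring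
  · intro hk; exact absurd (Finset.mem_univ j) hk

lemma lap_sum {ι : Type*} (s : Finset ι) (f : ι → MvPolynomial (Fin n) ℝ) :
    lap (∑ j ∈ s, f j) = ∑ j ∈ s, lap (f j) := by
  simp only [lap, map_sum]
  rw [Finset.sum_comm]

lemma lap_C_mul (a : ℝ) (p : MvPolynomial (Fin n) ℝ) : lap (C a * p) = C a * lap p := by
  simp only [lap, pderiv_C_mul, Finset.mul_sum]

lemma lap_LL_mul (x : Fin n → ℝ) (p : MvPolynomial (Fin n) ℝ) :
    lap (LL x * p) = LL x * lap p + 2 * DD x p := by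
  have h : ∀ j, pderiv j (pderiv j (LL x * p))
      = 2 * (C (x j) * pderiv j p) + LL x * pderiv j (pderiv j p) := by
    intro j
    rw [pderiv_mul, pderiv_LL, map_add, pderiv_C_mul, pderiv_mul, pderiv_LL]
    ring
  rw [lap]
  simp_rw [h]
  rw [Finset.sum_add_distrib, ← Finset.mul_sum, ← Finset.mul_sum, ← DD, ← lap]
  ring

lemma lap_RR_mul {m : ℕ} (p : MvPolynomial (Fin n) ℝ) (hp : p.IsHomogeneous m) :
    lap (RR n * p) = RR n * lap p + C (2*(n:ℝ) + 4*(m:ℝ)) * p := by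
  have heul : ∑ j, X j * pderiv j p = C ((m:ℝ)) * p := by
    have := euler_weighted (w := (1 : Fin n → ℕ)) hp
    simpa using this
  have h : ∀ j, pderiv j (pderiv j (RR n * p))
      = C 2 * p + C 4 * (X j * pderiv j p) + RR n * pderiv j (pderiv j p) := by
    intro j
    rw [pderiv_mul, pderiv_RR, map_add, pderiv_mul, pderiv_C_mul, pderiv_mul, pderiv_RR,
      pderiv_X_self,
      show (C 4 : MvPolynomial (Fin n) ℝ) = 4 from map_ofNat _ 4,
      show (C 2 : MvPolynomial (Fin n) ℝ) = 2 from map_ofNat _ 2]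
    ring
  rw [lap]
  simp_rw [h]
  rw [Finset.sum_add_distrib, Finset.sum_add_distrib, ← Finset.mul_sum, ← Finset.mul_sum, heul]
  rw [← Finset.mul_sum]
  rw [show ∑ j : Fin n, pderiv j (pderiv j p) = lap p from rfl]
  rw [Finset.sum_const, Finset.card_univ, Fintype.card_fin, nsmul_eq_mul]
  rw [show ((n:MvPolynomial (Fin n) ℝ)) = C ((n:ℝ)) from by push_cast; rfl]
  rw [show (C (2*(n:ℝ) + 4*(m:ℝ)) : MvPolynomial (Fin n) ℝ)
      = C ((n:ℝ)) * C 2 + C 4 * C ((m:ℝ)) from by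
    rw [← map_mul, ← map_mul, ← map_add]; ring_nf]
  ring

lemma lap_DD (x : Fin n → ℝ) (p : MvPolynomial (Fin n) ℝ) : lap (DD x p) = DD x (lap p) := by
  have key : ∀ k : Fin n, lap (C (x k) * pderiv k p) = C (x k) * pderiv k (lap p) := by
    intro k
    rw [lap_C_mul]
    congr 1
    rw [lap, lap, map_sum]
    apply Finset.sum_congr rfl
    intro j _
    rw [pderiv_comm j k p, pderiv_comm j k (pderiv j p)]
  rw [DD, lap_sum]
  simp_rw [key]
  rw [DD]


lemma lap_sub (p q : MvPolynomial (Fin n) ℝ) : lap (p - q) = lap p - lap q := by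
  simp [lap, Finset.sum_sub_distrib]

lemma ZZ_harm (hn : 2 ≤ n) (x : Fin n → ℝ) (hx : ∑ j, x j ^ 2 = 1) :
    ∀ i, lap (ZZ n x i) = 0
  | 0 => by rw [ZZ_zero]; simp [lap]
  | (i+1) => by
      have IH := ZZ_harm hn x hx i
      have hDh : lap (DD x (ZZ n x i)) = 0 := by rw [lap_DD, IH, DD]; simp
      have hDhom : (DD x (ZZ n x i)).IsHomogeneous (i - 1) := DD_hom x (ZZ_hom x i)
      rw [ZZ_succ x hx i, lap_sub, lap_LL_mul, IH, lap_C_mul, lap_RR_mul _ hDhom, hDh]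
      by_cases hi : i = 0
      · subst hi
        rw [ZZ_zero, DD_one]
        simp
      · have h1 : 1 ≤ i := Nat.one_le_iff_ne_zero.mpr hi
        have hc : (2 * (i:ℝ) + (n:ℝ) - 2) ≠ 0 := by
          have : (2:ℝ) ≤ (n:ℝ) := by exact_mod_cast hn
          have : (1:ℝ) ≤ (i:ℝ) := by exact_mod_cast h1
          linarith
        have hcast : ((i - 1 : ℕ) : ℝ) = (i:ℝ) - 1 := by
          rw [Nat.cast_sub h1]; norm_num
        rw [hcast]
        rw [show (2*(n:ℝ) + 4*((i:ℝ) - 1)) = 2 * (2 * (i:ℝ) + (n:ℝ) - 2) from by ring]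
        rw [show (C ((2 * (i:ℝ) + (n:ℝ) - 2)⁻¹) : MvPolynomial (Fin n) ℝ) *
            (RR n * 0 + C (2 * (2 * (i:ℝ) + (n:ℝ) - 2)) * DD x (ZZ n x i))
            = C 2 * DD x (ZZ n x i) from by
          rw [mul_zero, zero_add, ← mul_assoc, ← map_mul]
          congr 2
          field_simp]
        rw [show (C 2 : MvPolynomial (Fin n) ℝ) = 2 from map_ofNat _ 2]
        ring

lemma ZZ_struct (x : Fin n → ℝ) (hx : ∑ j, x j ^ 2 = 1) :
    ∀ i, ∃ W, ZZ n x i = LL x ^ i + RR n * W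
  | 0 => ⟨0, by rw [ZZ_zero, pow_zero]; ring⟩
  | (i+1) => by
      obtain ⟨W, hW⟩ := ZZ_struct x hx i
      refine ⟨LL x * W - C ((2 * (i:ℝ) + (n:ℝ) - 2)⁻¹) * DD x (ZZ n x i), ?_⟩
      rw [ZZ_succ x hx i, hW]
      ring

end Zonal

section Fischer

variable {n : ℕ}

noncomputable def ww (d : Fin n →₀ ℕ) : ℝ := ∏ j, (Nat.factorial (d j) : ℝ)

lemma ww_pos (d : Fin n →₀ ℕ) : 0 < ww d :=
  Finset.prod_pos fun j _ => by positivity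

noncomputable def FB (p q : MvPolynomial (Fin n) ℝ) : ℝ :=
  ∑ d ∈ q.support, coeff d p * coeff d q * ww d

lemma FB_eq_sum {q : MvPolynomial (Fin n) ℝ} (p : MvPolynomial (Fin n) ℝ)
    {T : Finset (Fin n →₀ ℕ)} (hT : q.support ⊆ T) :
    FB p q = ∑ d ∈ T, coeff d p * coeff d q * ww d := by
  rw [FB]
  apply Finset.sum_subset hT
  intro d _ hd
  rw [notMem_support_iff.mp hd]
  ring

lemma FB_comm (p q : MvPolynomial (Fin n) ℝ) : FB p q = FB q p := by
  rw [FB_eq_sum p (Finset.subset_union_right (s₁ := p.support)),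
    FB_eq_sum q (Finset.subset_union_left (s₂ := q.support))]
  apply Finset.sum_congr rfl
  intro d _
  ring

lemma FB_add_left (p q r : MvPolynomial (Fin n) ℝ) : FB (p + q) r = FB p r + FB q r := by
  rw [FB, FB, FB, ← Finset.sum_add_distrib]
  apply Finset.sum_congr rfl
  intro d _
  rw [coeff_add]
  ring

lemma FB_add_right (p q r : MvPolynomial (Fin n) ℝ) : FB p (q + r) = FB p q + FB p r := by
  rw [FB_comm, FB_comm p q, FB_comm p r, FB_add_left]

lemma FB_C_mul (a : ℝ) (p q : MvPolynomial (Fin n) ℝ) : FB (C a * p) q = a * FB p q := by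
  rw [FB, FB, Finset.mul_sum]
  apply Finset.sum_congr rfl
  intro d _
  rw [coeff_C_mul]
  ring

lemma FB_zero_left (q : MvPolynomial (Fin n) ℝ) : FB 0 q = 0 := by
  rw [FB]
  apply Finset.sum_eq_zero
  intro d _
  rw [coeff_zero]
  ring

lemma FB_sum_left {ι : Type*} (s : Finset ι) (f : ι → MvPolynomial (Fin n) ℝ)
    (q : MvPolynomial (Fin n) ℝ) : FB (∑ k ∈ s, f k) q = ∑ k ∈ s, FB (f k) q := by
  induction s using Finset.cons_induction with
  | empty => simp [FB_zero_left]
  | cons a s ha ih => rw [Finset.sum_cons, Finset.sum_cons, FB_add_left, ih]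

lemma FB_sum_right {ι : Type*} (s : Finset ι) (p : MvPolynomial (Fin n) ℝ)
    (f : ι → MvPolynomial (Fin n) ℝ) : FB p (∑ k ∈ s, f k) = ∑ k ∈ s, FB p (f k) := by
  rw [FB_comm, FB_sum_left]
  exact Finset.sum_congr rfl fun k _ => FB_comm _ _

lemma FB_monomial_left (e : Fin n →₀ ℕ) (a : ℝ) (q : MvPolynomial (Fin n) ℝ) :
    FB (monomial e a) q = a * coeff e q * ww e := by
  rw [FB_eq_sum (monomial e a) (Finset.subset_union_left (s₂ := {e}))]
  have hterm : ∀ d ∈ q.support ∪ {e}, coeff d (monomial e a) * coeff d q * ww d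
      = if e = d then a * coeff d q * ww d else 0 := by
    intro d _
    rw [coeff_monomial]
    split_ifs <;> ring
  rw [Finset.sum_congr rfl hterm, Finset.sum_ite_eq]
  rw [if_pos (Finset.mem_union_right _ (Finset.mem_singleton_self e))]

lemma FB_monomial_right (p : MvPolynomial (Fin n) ℝ) (e : Fin n →₀ ℕ) (a : ℝ) :
    FB p (monomial e a) = coeff e p * a * ww e := by
  rw [FB_comm, FB_monomial_left]
  ring

lemma ww_succ (e : Fin n →₀ ℕ) (j : Fin n) (h : e j ≠ 0) :
    ww e = (e j : ℝ) * ww (e - Finsupp.single j 1) := by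
  rw [ww, ww, ← Finset.prod_erase_mul _ _ (Finset.mem_univ j),
    ← Finset.prod_erase_mul _ _ (Finset.mem_univ j)]
  have h1 : ∀ k ∈ Finset.univ.erase j, (((e - Finsupp.single j 1 : Fin n →₀ ℕ)) k : ℕ) = e k := by
    intro k hk
    have hkj : k ≠ j := Finset.ne_of_mem_erase hk
    rw [Finsupp.tsub_apply, Finsupp.single_apply, if_neg (Ne.symm hkj)]
    omega
  have heq : ∏ k ∈ Finset.univ.erase j, ((Nat.factorial (((e - Finsupp.single j 1 : Fin n →₀ ℕ)) k) : ℝ))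
      = ∏ k ∈ Finset.univ.erase j, ((Nat.factorial (e k) : ℝ)) :=
    Finset.prod_congr rfl fun k hk => by rw [h1 k hk]
  rw [heq]
  have h2 : ((e - Finsupp.single j 1 : Fin n →₀ ℕ)) j = e j - 1 := by
    rw [Finsupp.tsub_apply, Finsupp.single_apply, if_pos rfl]
  rw [h2]
  have h3 : (e j : ℕ) = (e j - 1) + 1 := by omega
  have h4 : (Nat.factorial (e j) : ℝ) = (e j : ℝ) * (Nat.factorial (e j - 1) : ℝ) := by
    conv_lhs => rw [h3, Nat.factorial_succ]
    push_cast [Nat.cast_sub (show 1 ≤ e j by omega)]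
    ring
  rw [h4]
  ring

lemma FB_X_mul (j : Fin n) (p q : MvPolynomial (Fin n) ℝ) :
    FB (X j * p) q = FB p (pderiv j q) := by
  have hmono : ∀ (e : Fin n →₀ ℕ) (b : ℝ),
      FB (X j * p) (monomial e b) = FB p (pderiv j (monomial e b)) := by
    intro e b
    rw [FB_monomial_right, pderiv_monomial, FB_monomial_right]
    rw [coeff_X_mul' e j p]
    by_cases hj : e j = 0
    · rw [if_neg (by simp [Finsupp.mem_support_iff, hj]), hj]
      push_cast
      ring
    · rw [if_pos (by simp [Finsupp.mem_support_iff, hj])]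
      rw [ww_succ e j hj]
      push_cast
      ring
  conv_lhs => rw [q.as_sum]
  conv_rhs => rw [q.as_sum]
  rw [map_sum, FB_sum_right, FB_sum_right]
  exact Finset.sum_congr rfl fun e _ => hmono e _

lemma FB_nonneg (p : MvPolynomial (Fin n) ℝ) : 0 ≤ FB p p := by
  rw [FB]
  apply Finset.sum_nonneg
  intro d _
  have := ww_pos d
  nlinarith [sq_nonneg (coeff d p)]

lemma FB_RR_mul (p q : MvPolynomial (Fin n) ℝ) : FB (RR n * p) q = FB p (lap q) := by
  rw [RR, Finset.sum_mul, FB_sum_left, lap, FB_sum_right]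
  apply Finset.sum_congr rfl
  intro k _
  rw [pow_two, mul_assoc, FB_X_mul, FB_X_mul]

lemma FB_LL_mul (y : Fin n → ℝ) (p q : MvPolynomial (Fin n) ℝ) :
    FB (LL y * p) q = ∑ j, y j * FB p (pderiv j q) := by
  rw [LL, Finset.sum_mul, FB_sum_left]
  apply Finset.sum_congr rfl
  intro k _
  rw [mul_assoc, FB_C_mul, FB_X_mul]

lemma eval_homog_zero (y : Fin n → ℝ) {h : MvPolynomial (Fin n) ℝ}
    (hh : h.IsHomogeneous 0) : eval y h = coeff 0 h := by
  have hsupp : h.support ⊆ {0} := by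
    intro d hd
    rw [Finset.mem_singleton]
    have hw := hh (mem_support_iff.mp hd)
    ext k
    have hle := Finsupp.le_weight (w := (1 : Fin n → ℕ)) (s := k) (by simp) d
    rw [hw] at hle
    simpa using hle
  rw [eval_eq]
  rw [Finset.sum_subset hsupp (by
    intro d _ hd
    rw [notMem_support_iff.mp hd]
    ring)]
  simp

lemma FB_repro (y : Fin n → ℝ) :
    ∀ (i : ℕ) (h : MvPolynomial (Fin n) ℝ), h.IsHomogeneous i →
      FB (LL y ^ i) h = (Nat.factorial i : ℝ) * eval y h
  | 0, h, hh => by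
      rw [pow_zero, show (1 : MvPolynomial (Fin n) ℝ) = monomial 0 1 from rfl,
        FB_monomial_left, eval_homog_zero y hh]
      simp [ww]
  | (i+1), h, hh => by
      have heval : ∑ j, y j * eval y (pderiv j h) = ((i:ℝ) + 1) * eval y h := by
        have := euler_weighted (w := (1 : Fin n → ℕ)) hh
        have happ := congrArg (eval y) this
        simp only [map_sum, eval_mul, eval_C, eval_X, Pi.one_apply, Nat.cast_one, map_one,
          one_mul] at happ
        rw [happ]
        push_cast
        ring
      rw [pow_succ, mul_comm (LL y ^ i) (LL y), FB_LL_mul]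
      have hterm : ∀ j ∈ (Finset.univ : Finset (Fin n)), y j * FB (LL y ^ i) (pderiv j h)
          = (Nat.factorial i : ℝ) * (y j * eval y (pderiv j h)) := by
        intro j _
        rw [FB_repro y i (pderiv j h) (by
          have := pderiv_whom (w := (1 : Fin n → ℕ)) hh j
          simp at this; exact this)]
        ring
      rw [Finset.sum_congr rfl hterm, ← Finset.mul_sum, heval, Nat.factorial_succ]
      push_cast
      ring

end Fischer

section Bridge

open MvPolynomial

variable {n : ℕ}

/-- the dehomogenizing substitution `U ↦ X`, `S ↦ 1`. -/
noncomputable def phi : MvPolynomial (Fin 2) ℝ →ₐ[ℝ] Polynomial ℝ :=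
  aeval ![Polynomial.X, (1 : Polynomial ℝ)]

lemma phi_X0 : phi (X 0) = Polynomial.X := by
  rw [phi, aeval_X, Matrix.cons_val_zero]

lemma phi_X1 : phi (X 1) = 1 := by
  rw [phi, aeval_X, Matrix.cons_val_one, Matrix.cons_val_zero]

lemma phi_pderiv (P : MvPolynomial (Fin 2) ℝ) :
    phi (pderiv 0 P) = Polynomial.derivative (phi P) := by
  induction P using MvPolynomial.induction_on with
  | C a => rw [pderiv_C, map_zero, show phi (C a) = Polynomial.C a from by
      rw [phi, aeval_C]; rfl]; rw [Polynomial.derivative_C]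
  | add p q hp hq => rw [map_add, map_add, hp, hq, map_add, Polynomial.derivative_add]
  | mul_X p k hp =>
      rw [pderiv_mul, map_add, map_mul, map_mul, map_mul, hp]
      fin_cases k <;>
        simp [phi_X0, phi_X1, pderiv_X_self,
          pderiv_X_of_ne (show (0:Fin 2) ≠ 1 from by decide),
          Polynomial.derivative_mul, Polynomial.derivative_X]

noncomputable def lam (n : ℕ) : ℕ → ℝ
  | 0 => 1
  | 1 => 1
  | (i + 2) => lam n (i + 1) * (((i:ℝ) + 1) + (n:ℝ) - 2) / (2 * ((i:ℝ) + 1) + (n:ℝ) - 2)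

lemma lam_pos (hn : 2 ≤ n) : ∀ i, 0 < lam n i
  | 0 => one_pos
  | 1 => one_pos
  | (i + 2) => by
      have IH := lam_pos hn (i + 1)
      have h2 : (2:ℝ) ≤ (n:ℝ) := by exact_mod_cast hn
      have hi : (0:ℝ) ≤ (i:ℝ) := Nat.cast_nonneg i
      have hnum : (0:ℝ) < ((i:ℝ) + 1) + (n:ℝ) - 2 := by linarith
      have hden : (0:ℝ) < 2 * ((i:ℝ) + 1) + (n:ℝ) - 2 := by linarith
      rw [show lam n (i+2)
          = lam n (i + 1) * (((i:ℝ) + 1) + (n:ℝ) - 2) / (2 * ((i:ℝ) + 1) + (n:ℝ) - 2) from rfl]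
      exact div_pos (mul_pos IH hnum) hden

lemma ghat_eq (hn : 2 ≤ n) : ∀ i, phi (QU n i) = Polynomial.C (lam n i) * gegP n i
  | 0 => by
      rw [show QU n 0 = 1 from rfl, map_one, show lam n 0 = 1 from rfl,
        show gegP n 0 = 1 from rfl, map_one, one_mul]
  | 1 => by
      rw [QU_one, phi_X0, show lam n 1 = 1 from rfl, show gegP n 1 = Polynomial.X from rfl,
        map_one, one_mul]
  | (i + 2) => by
      have IH := ghat_eq hn (i + 1)
      have hc : (2 * (((i:ℕ)+1):ℝ) + (n:ℝ) - 2) ≠ 0 := by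
        have h2 : (2:ℝ) ≤ (n:ℝ) := by exact_mod_cast hn
        push_cast
        linarith
      -- Euler identity for QU n (i+1), mapped through phi
      have hEpoly := congrArg phi (euler_weighted (w := wt) (QU_whom n (i + 1)))
      rw [Fin.sum_univ_two] at hEpoly
      simp only [map_add, map_mul, phi_X0, phi_X1] at hEpoly
      rw [phi_pderiv, IH] at hEpoly
      rw [Polynomial.derivative_mul, Polynomial.derivative_C, zero_mul, zero_add] at hEpoly
      -- hEpoly : phi(C 1) * (X * (C lam * dG)) + phi(C 2) * (1 * phi(∂1 Q1)) = phi(C (i+1)) * (C lam * G)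
      rw [show (wt 0 : ℝ) = 1 from by simp [wt], show (wt 1 : ℝ) = 2 from by simp [wt]] at hEpoly
      rw [show phi (C (1:ℝ)) = Polynomial.C 1 from by rw [phi, aeval_C]; rfl,
        show phi (C (2:ℝ)) = Polynomial.C 2 from by rw [phi, aeval_C]; rfl,
        show phi (C (((i:ℕ)+1 : ℕ):ℝ)) = Polynomial.C (((i:ℕ)+1 : ℕ):ℝ) from by
          rw [phi, aeval_C]; rfl] at hEpoly
      -- the defining recurrence, mapped through phi
      have hq2 : phi (QU n (i + 2)) = Polynomial.X * phi (QU n (i+1))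
          - Polynomial.C ((2 * (((i:ℕ)+1):ℝ) + (n:ℝ) - 2)⁻¹) *
            (1 * (Polynomial.derivative (phi (QU n (i+1)))
              + 2 * Polynomial.X * phi (pderiv 1 (QU n (i+1))))) := by
        rw [show QU n (i+2) = X 0 * QU n (i+1)
            - C ((2 * (((i+1):ℕ):ℝ) + (n:ℝ) - 2)⁻¹) *
              (X 1 * (pderiv 0 (QU n (i+1)) + 2 * X 0 * pderiv 1 (QU n (i+1)))) from rfl]
        simp only [map_sub, map_mul, map_add]
        rw [phi_X0, phi_X1, phi_pderiv]
        rw [show phi (C ((2 * (((i+1):ℕ):ℝ) + (n:ℝ) - 2)⁻¹))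
            = Polynomial.C ((2 * (((i+1):ℕ):ℝ) + (n:ℝ) - 2)⁻¹) from by rw [phi, aeval_C]; rfl]
        rw [show phi (2 : MvPolynomial (Fin 2) ℝ) = 2 from map_ofNat _ 2]
        push_cast
        ring
      -- J-identity
      have hJ := gegP_deriv hn (i + 1)
      apply Polynomial.funext
      intro t
      have ht2 := congrArg (Polynomial.eval t) hq2
      have htE := congrArg (Polynomial.eval t) hEpoly
      have htJ := congrArg (Polynomial.eval t) hJ
      have htIH := congrArg (Polynomial.eval t) (congrArg Polynomial.derivative IH)
      rw [Polynomial.derivative_mul, Polynomial.derivative_C, zero_mul, zero_add] at htIH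
      simp only [Polynomial.eval_mul, Polynomial.eval_add, Polynomial.eval_sub,
        Polynomial.eval_one, Polynomial.eval_ofNat, Polynomial.eval_C, Polynomial.eval_X,
        Polynomial.eval_pow, Nat.cast_add, Nat.cast_one, zero_mul, zero_add,
        one_mul] at ht2 htE htJ htIH ⊢
      rw [htIH] at ht2
      set q2 := Polynomial.eval t (phi (QU n (i+2)))
      set s1 := Polynomial.eval t (phi (pderiv 1 (QU n (i+1))))
      set G := Polynomial.eval t (gegP n (i+1))
      set G2 := Polynomial.eval t (gegP n (i+2))
      set dG := Polynomial.eval t (Polynomial.derivative (gegP n (i+1)))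
      set Λ := lam n (i+1)
      rw [show Polynomial.eval t (phi (QU n (i+1))) = Λ * G from by
        rw [IH]; simp [Polynomial.eval_mul]; left; rfl] at ht2
      -- key scaled identity
      have key : (2 * ((i:ℝ)+1) + (n:ℝ) - 2) * q2
          = Λ * (((i:ℝ)+1) + (n:ℝ) - 2) * G2 := by
        have hcc := mul_inv_cancel₀ hc
        push_cast at ht2 htE htJ hcc ⊢
        linear_combination (2*((i:ℝ)+1)+(n:ℝ)-2) * ht2 - (Λ*dG + 2*t*s1) * hcc - t * htE - Λ * htJ
      have hlam : lam n (i+2) = Λ * (((i:ℝ)+1) + (n:ℝ) - 2) / (2 * ((i:ℝ)+1) + (n:ℝ) - 2) := rfl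
      push_cast at hc
      rw [hlam]
      rw [div_mul_eq_mul_div, eq_div_iff hc]
      linear_combination key


lemma eval_ZZ (hn : 2 ≤ n) (y z : Fin n → ℝ) (hy : ∑ j, y j ^ 2 = 1) (i : ℕ) :
    eval y (ZZ n z i) = lam n i * geg n i (∑ j, z j * y j) := by
  have hcomp : ((aeval (R := ℝ) y : MvPolynomial (Fin n) ℝ →ₐ[ℝ] ℝ).comp
        (aeval ![LL z, RR n]) : MvPolynomial (Fin 2) ℝ →ₐ[ℝ] ℝ)
      = (Polynomial.aeval (∑ j, z j * y j) : Polynomial ℝ →ₐ[ℝ] ℝ).comp phi := by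
    rw [comp_aeval, phi, comp_aeval]
    congr 1
    funext k
    fin_cases k
    · simp only [Fin.mk_zero, Matrix.cons_val_zero]
      rw [LL, map_sum, Polynomial.aeval_X]
      apply Finset.sum_congr rfl
      intro j _
      rw [map_mul, aeval_C, aeval_X]
      rfl
    · simp only [Fin.mk_one, Matrix.cons_val_one, Matrix.cons_val_zero]
      rw [RR, map_sum, map_one]
      have hterm : ∀ j ∈ (Finset.univ : Finset (Fin n)),
          (aeval (R := ℝ) y) ((X j : MvPolynomial (Fin n) ℝ)^2) = y j ^ 2 :=
        fun j _ => by rw [map_pow, aeval_X]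
      rw [Finset.sum_congr rfl hterm]
      exact hy
  have happ := congrArg (fun (ψ : MvPolynomial (Fin 2) ℝ →ₐ[ℝ] ℝ) => ψ (QU n i)) hcomp
  simp only [AlgHom.coe_comp, Function.comp_apply] at happ
  have h1 : (aeval (R := ℝ) y) ((aeval ![LL z, RR n]) (QU n i)) = eval y (ZZ n z i) := by
    rw [ZZ, ← MvPolynomial.coe_aeval_eq_eval]
    rfl
  have h2 : (Polynomial.aeval (∑ j, z j * y j)) (phi (QU n i))
      = lam n i * geg n i (∑ j, z j * y j) := by
    rw [ghat_eq hn i, map_mul, Polynomial.aeval_C, geg_eval n i]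
    rw [show (Polynomial.aeval (∑ j, z j * y j)) (gegP n i)
        = Polynomial.eval (∑ j, z j * y j) (gegP n i) from by
      rw [← Polynomial.coe_aeval_eq_eval]]
    rfl
  rw [← h1, happ, h2]

/-- Positive semidefiniteness of the Gegenbauer kernels on the unit sphere. -/
lemma psd (hn : 2 ≤ n) (i : ℕ) (s : Finset (EuclideanSpace ℝ (Fin n)))
    (hs : ∀ x ∈ s, ∑ j, x j ^ 2 = 1) :
    0 ≤ ∑ y ∈ s, ∑ z ∈ s, geg n i (∑ j, z j * y j) := by
  have hfact : (0:ℝ) < (Nat.factorial i : ℝ) := by positivity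
  have hlam := lam_pos hn i
  have key : ∀ y ∈ s, ∀ z ∈ s, FB (ZZ n y i) (ZZ n z i)
      = (Nat.factorial i : ℝ) * (lam n i * geg n i (∑ j, z j * y j)) := by
    intro y hy z hz
    obtain ⟨W, hW⟩ := ZZ_struct y (hs y hy) i
    rw [hW, FB_add_left, FB_RR_mul, ZZ_harm hn z (hs z hz) i]
    rw [show FB W 0 = 0 from by rw [FB]; simp]
    rw [add_zero]
    rw [FB_repro y i (ZZ n z i) (ZZ_hom z i)]
    rw [eval_ZZ hn y z (hs y hy) i]
  have hFB : 0 ≤ FB (∑ y ∈ s, ZZ n y i) (∑ y ∈ s, ZZ n y i) := FB_nonneg _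
  rw [FB_sum_left] at hFB
  have : ∀ y ∈ s, FB (ZZ n y i) (∑ z ∈ s, ZZ n z i)
      = ∑ z ∈ s, (Nat.factorial i : ℝ) * (lam n i * geg n i (∑ j, z j * y j)) := by
    intro y hy
    rw [FB_sum_right]
    exact Finset.sum_congr rfl fun z hz => key y hy z hz
  rw [Finset.sum_congr rfl this] at hFB
  have hfac : ∑ y ∈ s, ∑ z ∈ s, (Nat.factorial i : ℝ) * (lam n i * geg n i (∑ j, z j * y j))
      = (Nat.factorial i : ℝ) * lam n i * ∑ y ∈ s, ∑ z ∈ s, geg n i (∑ j, z j * y j) := by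
    rw [Finset.mul_sum]
    apply Finset.sum_congr rfl
    intro y _
    rw [Finset.mul_sum]
    apply Finset.sum_congr rfl
    intro z _
    ring
  rw [hfac] at hFB
  have hpos : (0:ℝ) < (Nat.factorial i : ℝ) * lam n i := mul_pos hfact hlam
  nlinarith

end Bridge
end MV

lemma ofReal_sum_le {ι : Type*} (s : Finset ι) (g : ι → ℝ) :
    ENNReal.ofReal (∑ i ∈ s, g i) ≤ ∑ i ∈ s, ENNReal.ofReal (g i) := by
  induction s using Finset.cons_induction with
  | empty => simp
  | cons a s ha ih =>
      rw [Finset.sum_cons, Finset.sum_cons]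
      exact le_trans (ENNReal.ofReal_add_le) (add_le_add le_rfl ih)

end LPaux

open scoped RealInnerProductSpace ENNReal Classical

theorem LP_bound_spherical_energy (n M : ℕ) (hn : 2 ≤ n) (hM : 2 ≤ M)
    (h : ℝ → ℝ≥0∞)
    (f : ℝ → ℝ) (m : ℕ) (c : ℕ → ℝ)
    (hf : ∀ t : ℝ, f t = ∑ i ∈ Finset.range (m + 1), c i * geg n i t)
    (hC1 : ∀ t ∈ Set.Icc (-1 : ℝ) 1, ENNReal.ofReal (f t) ≤ h t)
    (hC2a : 0 < c 0) (hC2b : ∀ i : ℕ, 1 ≤ i → i ≤ m → 0 ≤ c i)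
    (C : Finset (EuclideanSpace ℝ (Fin n)))
    (hsph : ∀ x ∈ C, ‖x‖ = 1) (hCM : C.card = M) :
    ENNReal.ofReal ((M : ℝ) * (c 0 * M - f 1)) ≤
      ∑ p ∈ (C ×ˢ C).filter (fun p => p.1 ≠ p.2), h ⟪p.1, p.2⟫ := by
  classical
  have hinner : ∀ x y : EuclideanSpace ℝ (Fin n), ⟪x, y⟫ = ∑ j, x j * y j := by
    intro x y
    rw [PiLp.inner_apply]
    apply Finset.sum_congr rfl
    intro j _
    simp [RCLike.inner_apply, mul_comm]
  have hunit : ∀ x ∈ C, ∑ j, x j ^ 2 = 1 := by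
    intro x hx
    have h1 : ⟪x, x⟫ = 1 := by
      rw [real_inner_self_eq_norm_mul_norm, hsph x hx]; norm_num
    rw [hinner x x] at h1
    rw [← h1]
    exact Finset.sum_congr rfl fun j _ => (sq (x j))
  have hIcc : ∀ x ∈ C, ∀ y ∈ C, ⟪x, y⟫ ∈ Set.Icc (-1 : ℝ) 1 := by
    intro x hx y hy
    have habs := abs_real_inner_le_norm x y
    rw [hsph x hx, hsph y hy, one_mul] at habs
    exact ⟨(abs_le.mp habs).1, (abs_le.mp habs).2⟩
  have hxx : ∀ x ∈ C, ⟪x, x⟫ = 1 := by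
    intro x hx
    rw [real_inner_self_eq_norm_mul_norm, hsph x hx]; norm_num
  -- the real-valued inequality
  have hdiag : ∑ p ∈ (C ×ˢ C).filter (fun p => ¬ p.1 ≠ p.2), f ⟪p.1, p.2⟫ = (M:ℝ) * f 1 := by
    rw [Finset.sum_filter, Finset.sum_product]
    have hterm : ∀ x ∈ C, (∑ y ∈ C, if ¬ x ≠ y then f ⟪x, y⟫ else 0) = f 1 := by
      intro x hx
      have heq : ∀ y ∈ C, (if ¬ x ≠ y then f ⟪x, y⟫ else 0) = (if x = y then f ⟪x, y⟫ else 0) :=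
        fun y _ => by simp
      rw [Finset.sum_congr rfl heq, Finset.sum_ite_eq C x (fun y => f ⟪x, y⟫), if_pos hx,
        hxx x hx]
    rw [Finset.sum_congr rfl hterm, Finset.sum_const, hCM, nsmul_eq_mul]
  have htotal : (c 0) * (M:ℝ)^2 ≤ ∑ p ∈ C ×ˢ C, f ⟪p.1, p.2⟫ := by
    have hswap : ∑ p ∈ C ×ˢ C, f ⟪p.1, p.2⟫
        = ∑ i ∈ Finset.range (m+1), ∑ p ∈ C ×ˢ C, c i * geg n i ⟪p.1, p.2⟫ := by
      rw [← Finset.sum_comm]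
      exact Finset.sum_congr rfl fun p _ => hf _
    rw [hswap]
    have hzero : ∑ p ∈ C ×ˢ C, c 0 * geg n 0 ⟪p.1, p.2⟫ = c 0 * (M:ℝ)^2 := by
      have heq : ∀ p ∈ C ×ˢ C, c 0 * geg n 0 ⟪p.1, p.2⟫ = c 0 :=
        fun p _ => by rw [show geg n 0 ⟪p.1,p.2⟫ = 1 from rfl, mul_one]
      rw [Finset.sum_congr rfl heq, Finset.sum_const, Finset.card_product, hCM, nsmul_eq_mul]
      push_cast
      ring
    rw [Finset.sum_range_succ' _ m]
    -- splits off the i = 0 term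
    rw [hzero]
    have hpos : ∀ i ∈ Finset.range m, 0 ≤ ∑ p ∈ C ×ˢ C, c (i+1) * geg n (i+1) ⟪p.1, p.2⟫ := by
      intro i hi
      have hci : 0 ≤ c (i+1) :=
        hC2b (i+1) (by omega) (by have := Finset.mem_range.mp hi; omega)
      have hpsd := LPaux.psd hn (i+1) C hunit
      have hrw : ∑ y ∈ C, ∑ z ∈ C, geg n (i+1) (∑ j, z j * y j)
          = ∑ p ∈ C ×ˢ C, geg n (i+1) ⟪p.1, p.2⟫ := by
        rw [Finset.sum_product]
        apply Finset.sum_congr rfl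
        intro y _
        apply Finset.sum_congr rfl
        intro z _
        rw [hinner]
        congr 1
        exact Finset.sum_congr rfl fun j _ => mul_comm _ _
      rw [hrw] at hpsd
      rw [← Finset.mul_sum]
      exact mul_nonneg hci hpsd
    have := Finset.sum_nonneg hpos
    linarith
  have hsplit := Finset.sum_filter_add_sum_filter_not (C ×ˢ C) (fun p => p.1 ≠ p.2)
    (fun p => f ⟪p.1, p.2⟫)
  have hreal : (M : ℝ) * (c 0 * M - f 1)
      ≤ ∑ p ∈ (C ×ˢ C).filter (fun p => p.1 ≠ p.2), f ⟪p.1, p.2⟫ := by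
    have h1 : ∑ p ∈ (C ×ˢ C).filter (fun p => p.1 ≠ p.2), f ⟪p.1, p.2⟫
        = (∑ p ∈ C ×ˢ C, f ⟪p.1, p.2⟫) - (M:ℝ) * f 1 := by
      rw [← hsplit, hdiag]
      ring
    rw [h1]
    have : (M:ℝ) * (c 0 * M - f 1) = c 0 * (M:ℝ)^2 - M * f 1 := by ring
    linarith
  calc ENNReal.ofReal ((M : ℝ) * (c 0 * M - f 1))
      ≤ ENNReal.ofReal (∑ p ∈ (C ×ˢ C).filter (fun p => p.1 ≠ p.2), f ⟪p.1, p.2⟫) :=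
        ENNReal.ofReal_le_ofReal hreal
    _ ≤ ∑ p ∈ (C ×ˢ C).filter (fun p => p.1 ≠ p.2), ENNReal.ofReal (f ⟪p.1, p.2⟫) :=
        LPaux.ofReal_sum_le _ _
    _ ≤ ∑ p ∈ (C ×ˢ C).filter (fun p => p.1 ≠ p.2), h ⟪p.1, p.2⟫ := by
        apply Finset.sum_le_sum
        intro p hp
        have hpC := Finset.mem_filter.mp hp
        have hp1 := (Finset.mem_product.mp hpC.1).1
        have hp2 := (Finset.mem_product.mp hpC.1).2
        exact hC1 _ (hIcc p.1 hp1 p.2 hp2)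
end
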